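/- arXiv:1112.1236 — 4 statements merged into one kernel-verified Lean document; each statement's English description precedes it below -/
import Mathlib

section
/- Let D be an integral domain, S ⊆ D a multiplicative set, * a star operation on D and ♯ a star operation on the fraction ring D_S, such that I* ⊆ (I·D_S)^♯ for each nonzero ideal I of D. If D is *-sharp, then D_S is ♯-sharp. -/
open scoped nonZeroDivisors

/-- A star operation on an integral domain `D` with quotient field `K`: a map
`I ↦ I*` on (nonzero) fractional ideals such that `D* = D`, `(aI)* = a·I*`,
`I ⊆ I*`, `I ⊆ J → I* ⊆ J*` and `(I*)* = I*`. (The value at `0` is irrelevant.) -/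
structure StarOperation (D K : Type*) [CommRing D] [IsDomain D] [Field K]
    [Algebra D K] [IsFractionRing D K] where
  star : FractionalIdeal D⁰ K → FractionalIdeal D⁰ K
  star_one : star 1 = 1
  star_smul : ∀ (a : K), a ≠ 0 → ∀ I : FractionalIdeal D⁰ K, I ≠ 0 →
    star (FractionalIdeal.spanSingleton D⁰ a * I) = FractionalIdeal.spanSingleton D⁰ a * star I
  le_star : ∀ I : FractionalIdeal D⁰ K, I ≠ 0 → I ≤ star I
  star_mono : ∀ I J : FractionalIdeal D⁰ K, I ≠ 0 → J ≠ 0 → I ≤ J → star I ≤ star J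
  star_star : ∀ I : FractionalIdeal D⁰ K, I ≠ 0 → star (star I) = star I

section StarSharpDefs

variable {D K : Type*} [CommRing D] [IsDomain D] [Field K] [Algebra D K] [IsFractionRing D K]

/-- `D` is sharp with respect to the operation `star` ("`*`-sharp"): whenever
`I ⊇ A·B` for nonzero ideals `I, A, B` of `D`, there exist nonzero ideals `H, J`
with `I* = (HJ)*`, `H* ⊇ A` and `J* ⊇ B`. -/
def IsSharpOp (star : FractionalIdeal D⁰ K → FractionalIdeal D⁰ K) : Prop :=
  ∀ I A B : Ideal D, I ≠ 0 → A ≠ 0 → B ≠ 0 → A * B ≤ I →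
    ∃ H J : Ideal D, H ≠ 0 ∧ J ≠ 0 ∧
      star (I : FractionalIdeal D⁰ K) =
        star ((H : FractionalIdeal D⁰ K) * (J : FractionalIdeal D⁰ K)) ∧
      (A : FractionalIdeal D⁰ K) ≤ star (H : FractionalIdeal D⁰ K) ∧
      (B : FractionalIdeal D⁰ K) ≤ star (J : FractionalIdeal D⁰ K)

/-- `D` is `*`-sharp for the star operation `s`. -/
def StarOperation.IsSharp (s : StarOperation D K) : Prop :=
  IsSharpOp s.star

end StarSharpDefs

/-- Let `D` be an integral domain, `S ⊆ D` a multiplicative set,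
`*` a star operation on `D` and `♯` a star operation on the fraction ring `D_S = E`,
such that `I* ⊆ (I·D_S)^♯` for each nonzero ideal `I` of `D`. If `D` is `*`-sharp,
then `D_S` is `♯`-sharp. -/
theorem statement0 (D : Type*) [CommRing D] [IsDomain D]
    (K : Type*) [Field K] [Algebra D K] [IsFractionRing D K]
    (S : Submonoid D) (hS : S ≤ D⁰)
    (E : Type*) [CommRing E] [IsDomain E] [Algebra D E] [IsLocalization S E]
    [Algebra E K] [IsScalarTower D E K] [IsFractionRing E K]
    (s : StarOperation D K) (sh : StarOperation E K)
    (hcomp : ∀ I : Ideal D, I ≠ 0 → ∀ x : K,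
      x ∈ s.star (I : FractionalIdeal D⁰ K) →
      x ∈ sh.star ((I.map (algebraMap D E) : Ideal E) : FractionalIdeal E⁰ K))
    (hD : s.IsSharp) :
    sh.IsSharp := by
  have finj : Function.Injective (algebraMap D E) := IsLocalization.injective E hS
  have exmem : ∀ C : Ideal E, C ≠ 0 → ∃ a : D, a ≠ 0 ∧ algebraMap D E a ∈ C := by
    intro C hC
    obtain ⟨x, hxC, hx0⟩ := Submodule.exists_mem_ne_zero_of_ne_bot (by simpa using hC)
    obtain ⟨⟨a, t⟩, hat⟩ := IsLocalization.surj S x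
    refine ⟨a, ?_, by rw [← hat]; exact C.mul_mem_right _ hxC⟩
    rintro rfl
    rw [map_zero] at hat
    have ht : algebraMap D E (t : D) ≠ 0 := fun h => by
      have h0 : (t : D) ≠ 0 := nonZeroDivisors.ne_zero (hS t.2)
      exact h0 (finj (by rw [h, map_zero]))
    rcases mul_eq_zero.1 hat with h | h
    · exact hx0 h
    · exact ht h
  have comap_ne : ∀ C : Ideal E, C ≠ 0 → C.comap (algebraMap D E) ≠ 0 := by
    intro C hC h
    obtain ⟨a, ha0, ha⟩ := exmem C hC
    have : a ∈ C.comap (algebraMap D E) := Ideal.mem_comap.2 ha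
    rw [h] at this
    exact ha0 (by simpa using this)
  have map_ne : ∀ C : Ideal D, C ≠ 0 → C.map (algebraMap D E) ≠ 0 := by
    intro C hC h
    obtain ⟨b, hbC, hb0⟩ := Submodule.exists_mem_ne_zero_of_ne_bot (by simpa using hC)
    have : algebraMap D E b ∈ C.map (algebraMap D E) := Ideal.mem_map_of_mem _ hbC
    rw [h] at this
    exact hb0 (finj (by rw [map_zero]; simpa using this))
  have key : ∀ C₁ C₂ : Ideal D, C₂ ≠ 0 →
      (C₁ : FractionalIdeal D⁰ K) ≤ s.star (C₂ : FractionalIdeal D⁰ K) →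
      ((C₁.map (algebraMap D E) : Ideal E) : FractionalIdeal E⁰ K) ≤
        sh.star ((C₂.map (algebraMap D E) : Ideal E) : FractionalIdeal E⁰ K) := by
    intro C₁ C₂ hC₂ hle x hx
    obtain ⟨a, haM, rfl⟩ := (FractionalIdeal.mem_coeIdeal _).1 hx
    have h2 : C₁.map (algebraMap D E) ≤
        Submodule.comap (Algebra.linearMap E K)
          (sh.star ((C₂.map (algebraMap D E) : Ideal E) : FractionalIdeal E⁰ K) :
            Submodule E K) := by
      rw [Ideal.map_le_iff_le_comap]
      intro b hb
      simp only [Ideal.mem_comap, Submodule.mem_comap, Algebra.linearMap_apply,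
        FractionalIdeal.mem_coe]
      rw [← IsScalarTower.algebraMap_apply]
      exact hcomp C₂ hC₂ _ (hle (FractionalIdeal.mem_coeIdeal_of_mem _ hb))
    have h3 := h2 haM
    simpa [Submodule.mem_comap, Algebra.linearMap_apply, FractionalIdeal.mem_coe] using h3
  have star_ne : ∀ C : FractionalIdeal E⁰ K, C ≠ 0 → sh.star C ≠ 0 := by
    intro C hC h0
    have := sh.le_star _ hC
    rw [h0] at this
    exact hC (le_antisymm this (FractionalIdeal.zero_le _))
  have key2 : ∀ C₁ C₂ : Ideal D, C₁ ≠ 0 → C₂ ≠ 0 →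
      s.star (C₁ : FractionalIdeal D⁰ K) = s.star (C₂ : FractionalIdeal D⁰ K) →
      sh.star ((C₁.map (algebraMap D E) : Ideal E) : FractionalIdeal E⁰ K) =
        sh.star ((C₂.map (algebraMap D E) : Ideal E) : FractionalIdeal E⁰ K) := by
    have half : ∀ C₁ C₂ : Ideal D, C₁ ≠ 0 → C₂ ≠ 0 →
        s.star (C₁ : FractionalIdeal D⁰ K) ≤ s.star (C₂ : FractionalIdeal D⁰ K) →
        sh.star ((C₁.map (algebraMap D E) : Ideal E) : FractionalIdeal E⁰ K) ≤
          sh.star ((C₂.map (algebraMap D E) : Ideal E) : FractionalIdeal E⁰ K) := by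
      intro C₁ C₂ h1 h2 hle
      have hc1 : (C₁ : FractionalIdeal D⁰ K) ≠ 0 :=
        FractionalIdeal.coeIdeal_ne_zero.2 (by simpa using h1)
      have hle' := key C₁ C₂ h2 ((s.le_star _ hc1).trans hle)
      have hm1 : ((C₁.map (algebraMap D E) : Ideal E) : FractionalIdeal E⁰ K) ≠ 0 :=
        FractionalIdeal.coeIdeal_ne_zero.2 (by simpa using map_ne C₁ h1)
      have hm2 : ((C₂.map (algebraMap D E) : Ideal E) : FractionalIdeal E⁰ K) ≠ 0 :=
        FractionalIdeal.coeIdeal_ne_zero.2 (by simpa using map_ne C₂ h2)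
      have := sh.star_mono _ _ hm1 (star_ne _ hm2) hle'
      rwa [sh.star_star _ hm2] at this
    intro C₁ C₂ h1 h2 heq
    exact le_antisymm (half C₁ C₂ h1 h2 heq.le) (half C₂ C₁ h2 h1 heq.ge)
  intro I A B hI hA hB hAB
  have hI₀ : I.comap (algebraMap D E) ≠ 0 := comap_ne I hI
  have hA₀ : A.comap (algebraMap D E) ≠ 0 := comap_ne A hA
  have hB₀ : B.comap (algebraMap D E) ≠ 0 := comap_ne B hB
  have hprod : A.comap (algebraMap D E) * B.comap (algebraMap D E) ≤
      I.comap (algebraMap D E) := by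
    rw [Ideal.mul_le]
    intro a ha b hb
    rw [Ideal.mem_comap, map_mul]
    exact hAB (Ideal.mul_mem_mul ha hb)
  obtain ⟨H₀, J₀, hH₀, hJ₀, hstar, hAH, hBJ⟩ := hD _ _ _ hI₀ hA₀ hB₀ hprod
  have hHJ₀ : H₀ * J₀ ≠ 0 := by
    obtain ⟨a, haH, ha0⟩ := Submodule.exists_mem_ne_zero_of_ne_bot (by simpa using hH₀)
    obtain ⟨b, hbJ, hb0⟩ := Submodule.exists_mem_ne_zero_of_ne_bot (by simpa using hJ₀)
    intro h
    have : a * b ∈ H₀ * J₀ := Ideal.mul_mem_mul haH hbJ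
    rw [h] at this
    exact mul_ne_zero ha0 hb0 (by simpa using this)
  refine ⟨H₀.map (algebraMap D E), J₀.map (algebraMap D E),
    map_ne _ hH₀, map_ne _ hJ₀, ?_, ?_, ?_⟩
  · have hre : (I : FractionalIdeal E⁰ K) =
        (((I.comap (algebraMap D E)).map (algebraMap D E) : Ideal E) :
          FractionalIdeal E⁰ K) := by
      rw [IsLocalization.map_comap S E]
    rw [hre, ← FractionalIdeal.coeIdeal_mul, ← Ideal.map_mul]
    refine key2 _ _ hI₀ hHJ₀ ?_
    rw [← FractionalIdeal.coeIdeal_mul] at hstar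
    exact hstar
  · have hre : (A : FractionalIdeal E⁰ K) =
        (((A.comap (algebraMap D E)).map (algebraMap D E) : Ideal E) :
          FractionalIdeal E⁰ K) := by
      rw [IsLocalization.map_comap S E]
    rw [hre]
    exact key _ _ hH₀ hAH
  · have hre : (B : FractionalIdeal E⁰ K) =
        (((B.comap (algebraMap D E)).map (algebraMap D E) : Ideal E) :
          FractionalIdeal E⁰ K) := by
      rw [IsLocalization.map_comap S E]
    rw [hre]
    exact key _ _ hJ₀ hBJ
end

section
/- Let D be an integral domain and let *₁ and *₂ be star operations on D with *₁ ≤ *₂ (meaning I^{*₁} ⊆ I^{*₂} for every nonzero fractional ideal I of D). If D is *₁-sharp, then D is *₂-sharp. -/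
open scoped nonZeroDivisors

/-- If `*₁ ≤ *₂` are star operations on `D` and `D` is `*₁`-sharp,
then `D` is `*₂`-sharp. -/
theorem statement1 (D : Type*) [CommRing D] [IsDomain D]
    (K : Type*) [Field K] [Algebra D K] [IsFractionRing D K]
    (s₁ s₂ : StarOperation D K)
    (h12 : ∀ I : FractionalIdeal D⁰ K, I ≠ 0 → s₁.star I ≤ s₂.star I)
    (h : s₁.IsSharp) :
    s₂.IsSharp := by
  intro I A B hI hA hB hAB
  obtain ⟨H, J, hH, hJ, h1, h2, h3⟩ := h I A B hI hA hB hAB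
  have key : ∀ X : FractionalIdeal D⁰ K, X ≠ 0 → s₂.star (s₁.star X) = s₂.star X := by
    intro X hX
    have hs1 : s₁.star X ≠ 0 := fun h0 => hX (FractionalIdeal.le_zero_iff.mp (h0 ▸ s₁.le_star X hX))
    have hs2 : s₂.star X ≠ 0 := fun h0 => hX (FractionalIdeal.le_zero_iff.mp (h0 ▸ s₂.le_star X hX))
    apply le_antisymm
    · calc s₂.star (s₁.star X) ≤ s₂.star (s₂.star X) :=
            s₂.star_mono _ _ hs1 hs2 (h12 X hX)
        _ = s₂.star X := s₂.star_star X hX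
    · exact s₂.star_mono _ _ hX hs1 (s₁.le_star X hX)
  have hIc : (I : FractionalIdeal D⁰ K) ≠ 0 := by
    simpa using hI
  have hHc : (H : FractionalIdeal D⁰ K) ≠ 0 := by simpa using hH
  have hJc : (J : FractionalIdeal D⁰ K) ≠ 0 := by simpa using hJ
  have hHJ : (H : FractionalIdeal D⁰ K) * (J : FractionalIdeal D⁰ K) ≠ 0 :=
    by rw [← FractionalIdeal.coeIdeal_mul]; exact FractionalIdeal.coeIdeal_ne_zero.mpr (mul_ne_zero hH hJ)
  refine ⟨H, J, hH, hJ, ?_, ?_, ?_⟩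
  · rw [← key _ hIc, h1, key _ hHJ]
  · exact le_trans h2 (h12 _ hHc)
  · exact le_trans h3 (h12 _ hJc)
end

section
/- Let D be an integral domain and * a star operation on D. If D is *-Dedekind, then D is *-sharp. In particular, every Krull domain is t-sharp. -/
open scoped nonZeroDivisors

/-- `P` is a height one prime of `R`. -/
def IsHeightOnePrime {R : Type*} [CommRing R] (P : Ideal R) : Prop :=
  P.IsPrime ∧ P ≠ ⊥ ∧ ∀ Q : Ideal R, Q.IsPrime → Q < P → Q = ⊥

/-- `R` is a Krull domain: the localizations of `R` at the height one primes are
discrete valuation rings, `R` is the intersection of these localizations inside its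
quotient field, and every nonzero element of `R` lies in only finitely many height
one primes. -/
def IsKrullDomain (R : Type*) [CommRing R] [IsDomain R] : Prop :=
  (∀ P : Ideal R, IsHeightOnePrime P → ∃ _ : P.IsPrime,
      ∃ _ : IsDomain (Localization.AtPrime P), IsDiscreteValuationRing (Localization.AtPrime P)) ∧
  (∀ x : FractionRing R,
      (∀ P : Ideal R, IsHeightOnePrime P →
        ∃ s : R, s ∉ P ∧ ∃ a : R,
          algebraMap R (FractionRing R) a = algebraMap R (FractionRing R) s * x) →
      ∃ d : R, algebraMap R (FractionRing R) d = x) ∧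
  (∀ x : R, x ≠ 0 → {P : Ideal R | IsHeightOnePrime P ∧ x ∈ P}.Finite)

section StarSharpDefs

variable {D K : Type*} [CommRing D] [IsDomain D] [Field K] [Algebra D K] [IsFractionRing D K]

/-- `D` is `*`-Dedekind if every nonzero fractional ideal `I` is `*`-invertible,
i.e. `(I·I⁻¹)* = D`. -/
def StarOperation.IsStarDedekind (s : StarOperation D K) : Prop :=
  ∀ I : FractionalIdeal D⁰ K, I ≠ 0 → s.star (I * I⁻¹) = 1

lemma inv_ne_zero' {I : FractionalIdeal D⁰ K} (hI : I ≠ 0) : I⁻¹ ≠ 0 := by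
  obtain ⟨d, hd, hdI⟩ := I.isFractional
  have hmem : algebraMap D K d ∈ I⁻¹ := by
    rw [FractionalIdeal.mem_inv_iff hI]
    intro y hy
    obtain ⟨c, hc⟩ := hdI y hy
    refine ⟨c, trivial, ?_⟩
    simpa [Algebra.smul_def] using hc
  intro h0
  rw [h0] at hmem
  have : algebraMap D K d ≠ 0 :=
    IsFractionRing.to_map_ne_zero_of_mem_nonZeroDivisors hd
  exact this (by simpa using hmem)

/-- The `v`-operation `I ↦ I_v = (I⁻¹)⁻¹`. -/
noncomputable def vOp (I : FractionalIdeal D⁰ K) : FractionalIdeal D⁰ K := (I⁻¹)⁻¹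

lemma vOp_mono {I J : FractionalIdeal D⁰ K} (h : I ≤ J) : vOp I ≤ vOp J := by
  rcases eq_or_ne I 0 with rfl | hI
  · show ((0 : FractionalIdeal D⁰ K)⁻¹)⁻¹ ≤ vOp J
    rw [FractionalIdeal.inv_zero', FractionalIdeal.inv_zero']
    exact FractionalIdeal.zero_le _
  have hJ : J ≠ 0 := fun hJ0 => hI (le_antisymm (hJ0 ▸ h) (FractionalIdeal.zero_le I))
  exact FractionalIdeal.inv_anti_mono (inv_ne_zero' hJ) (inv_ne_zero' hI)
    (FractionalIdeal.inv_anti_mono hI hJ h)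

/-- The `t`-operation: `I_t` is the union of `H_v` over the finitely generated
subideals `H` of `I`. -/
noncomputable def tOp (I : FractionalIdeal D⁰ K) : FractionalIdeal D⁰ K :=
  ⟨⨆ J : {J : FractionalIdeal D⁰ K // (J : Submodule D K).FG ∧ J ≤ I},
      ((vOp (J : FractionalIdeal D⁰ K) : FractionalIdeal D⁰ K) : Submodule D K),
    FractionalIdeal.isFractional_of_le (J := vOp I)
      (iSup_le fun J => FractionalIdeal.coe_le_coe.2 (vOp_mono J.2.2))⟩

end StarSharpDefs

/-- `R` is a `t`-sharp domain. -/
def IsTSharp (R : Type*) [CommRing R] [IsDomain R] : Prop :=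
  IsSharpOp (D := R) (K := FractionRing R) tOp
section GenericHelpers

variable {D K : Type*} [CommRing D] [IsDomain D] [Field K] [Algebra D K] [IsFractionRing D K]

open FractionalIdeal

set_option linter.unusedSectionVars false

lemma FI_ne_zero_of_le {I J : FractionalIdeal D⁰ K} (hI : I ≠ 0) (h : I ≤ J) : J ≠ 0 :=
  fun h0 => hI (le_antisymm (h0 ▸ h) (FractionalIdeal.zero_le I))

lemma FI_exists_ne_zero {I : FractionalIdeal D⁰ K} (hI : I ≠ 0) : ∃ x ∈ I, x ≠ 0 := by
  by_contra h
  push_neg at h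
  exact hI (FractionalIdeal.eq_zero_iff.mpr h)

lemma FI_mul_ne_zero {I J : FractionalIdeal D⁰ K} (hI : I ≠ 0) (hJ : J ≠ 0) : I * J ≠ 0 := by
  obtain ⟨x, hxI, hx⟩ := FI_exists_ne_zero hI
  obtain ⟨y, hyJ, hy⟩ := FI_exists_ne_zero hJ
  intro h0
  have : x * y ∈ I * J := FractionalIdeal.mul_mem_mul hxI hyJ
  rw [h0] at this
  exact mul_ne_zero hx hy (by simpa using this)

lemma le_vOp {I : FractionalIdeal D⁰ K} (hI : I ≠ 0) : I ≤ vOp I := by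
  intro x hx
  show x ∈ vOp I
  rw [vOp]
  refine (FractionalIdeal.mem_inv_iff (inv_ne_zero' hI)).mpr fun y hy => ?_
  rw [mul_comm]
  exact (FractionalIdeal.mem_inv_iff hI).mp hy x hx

lemma mul_inv_le_one' {N : Ideal D} (hN : N ≠ 0) :
    (N : FractionalIdeal D⁰ K) * (N : FractionalIdeal D⁰ K)⁻¹ ≤ 1 := by
  rw [FractionalIdeal.mul_le]
  intro i hi j hj
  rw [mul_comm]
  exact (FractionalIdeal.mem_inv_iff ((FractionalIdeal.coeIdeal_ne_zero).mpr hN)).mp hj i hi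

/-- The abstract sharpness criterion. -/
lemma isSharpOp_of (star : FractionalIdeal D⁰ K → FractionalIdeal D⁰ K)
    (h1 : ∀ I : FractionalIdeal D⁰ K, I ≠ 0 → I ≤ star I)
    (h2 : ∀ I J : FractionalIdeal D⁰ K, I ≠ 0 → J ≠ 0 → I ≤ J → star I ≤ star J)
    (h3 : ∀ N : Ideal D, N ≠ 0 → ∀ X : FractionalIdeal D⁰ K, X ≠ 0 →
      star (X * ((N : FractionalIdeal D⁰ K) * (N : FractionalIdeal D⁰ K)⁻¹)) = star X) :
    IsSharpOp star := by
  intro I A B hI hA hB hAB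
  set H : Ideal D := A ⊔ I with hH
  have hH0 : H ≠ 0 := fun h0 => hA (le_bot_iff.mp (h0 ▸ le_sup_left : A ≤ (0 : Ideal D)))
  have hcH : (H : FractionalIdeal D⁰ K) ≠ 0 := FractionalIdeal.coeIdeal_ne_zero.mpr hH0
  have hcI : (I : FractionalIdeal D⁰ K) ≠ 0 := FractionalIdeal.coeIdeal_ne_zero.mpr hI
  have hcHinv : (H : FractionalIdeal D⁰ K)⁻¹ ≠ 0 := inv_ne_zero' hcH
  set J' : FractionalIdeal D⁰ K := (I : FractionalIdeal D⁰ K) * (H : FractionalIdeal D⁰ K)⁻¹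
    with hJ'
  have hJ'0 : J' ≠ 0 := FI_mul_ne_zero hcI hcHinv
  have hJ'le1 : J' ≤ 1 := by
    rw [hJ', FractionalIdeal.mul_le]
    intro i hi z hz
    rw [mul_comm]
    refine (FractionalIdeal.mem_inv_iff hcH).mp hz i ?_
    exact (FractionalIdeal.coeIdeal_le_coeIdeal K).mpr (le_sup_right : I ≤ H) hi
  obtain ⟨J, hJeq⟩ := FractionalIdeal.le_one_iff_exists_coeIdeal.mp hJ'le1
  have hJ0 : J ≠ 0 := by
    intro h0
    rw [h0] at hJeq
    exact hJ'0 (hJeq.symm.trans (by simp))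
  refine ⟨H, J, hH0, hJ0, ?_, ?_, ?_⟩
  · have : (H : FractionalIdeal D⁰ K) * (J : FractionalIdeal D⁰ K)
        = (I : FractionalIdeal D⁰ K) * ((H : FractionalIdeal D⁰ K) * (H : FractionalIdeal D⁰ K)⁻¹) := by
      rw [hJeq, hJ']; ring
    rw [this, h3 H hH0 _ hcI]
  · exact le_trans ((FractionalIdeal.coeIdeal_le_coeIdeal K).mpr (le_sup_left : A ≤ H))
      (h1 _ hcH)
  · have hcB : (B : FractionalIdeal D⁰ K) ≠ 0 := FractionalIdeal.coeIdeal_ne_zero.mpr hB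
    have hBH : (B : FractionalIdeal D⁰ K) * (H : FractionalIdeal D⁰ K) ≤ (I : FractionalIdeal D⁰ K) := by
      rw [← FractionalIdeal.coeIdeal_mul]
      refine (FractionalIdeal.coeIdeal_le_coeIdeal K).mpr ?_
      rw [hH, Submodule.mul_sup]
      exact sup_le (le_trans (le_of_eq (mul_comm B A)) hAB) (Ideal.mul_le_right)
    have hle : (B : FractionalIdeal D⁰ K) * ((H : FractionalIdeal D⁰ K) * (H : FractionalIdeal D⁰ K)⁻¹)
        ≤ (J : FractionalIdeal D⁰ K) := by
      rw [hJeq, hJ', ← mul_assoc]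
      exact mul_le_mul_left hBH _
    have hne : (B : FractionalIdeal D⁰ K) * ((H : FractionalIdeal D⁰ K) * (H : FractionalIdeal D⁰ K)⁻¹) ≠ 0 :=
      FI_mul_ne_zero hcB (FI_mul_ne_zero hcH hcHinv)
    have hcJ : (J : FractionalIdeal D⁰ K) ≠ 0 := FractionalIdeal.coeIdeal_ne_zero.mpr hJ0
    calc (B : FractionalIdeal D⁰ K)
        ≤ star ((B : FractionalIdeal D⁰ K) * ((H : FractionalIdeal D⁰ K) * (H : FractionalIdeal D⁰ K)⁻¹)) := by
          rw [h3 H hH0 _ hcB]; exact h1 _ hcB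
      _ ≤ star (J : FractionalIdeal D⁰ K) := h2 _ _ hne hcJ hle

end GenericHelpers
section StarHelpers

variable {D K : Type*} [CommRing D] [IsDomain D] [Field K] [Algebra D K] [IsFractionRing D K]

lemma sop_star_ne_zero (s : StarOperation D K) {I : FractionalIdeal D⁰ K} (hI : I ≠ 0) :
    s.star I ≠ 0 :=
  FI_ne_zero_of_le hI (s.le_star I hI)

lemma mul_star_le (s : StarOperation D K) {X Y : FractionalIdeal D⁰ K} (hX : X ≠ 0)
    (hY : Y ≠ 0) : X * s.star Y ≤ s.star (X * Y) := by
  rw [FractionalIdeal.mul_le]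
  intro x hx y hy
  rcases eq_or_ne x 0 with rfl | hx0
  · rw [zero_mul]; exact Submodule.zero_mem _
  have hsx : FractionalIdeal.spanSingleton D⁰ x * Y ≠ 0 :=
    FI_mul_ne_zero (FractionalIdeal.spanSingleton_ne_zero_iff.mpr hx0) hY
  have h1 : x * y ∈ FractionalIdeal.spanSingleton D⁰ x * s.star Y :=
    FractionalIdeal.mul_mem_mul (FractionalIdeal.mem_spanSingleton_self D⁰ x) hy
  rw [← s.star_smul x hx0 Y hY] at h1
  refine s.star_mono _ _ hsx (FI_mul_ne_zero hX hY) ?_ h1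
  exact mul_le_mul_left (FractionalIdeal.spanSingleton_le_iff_mem.mpr hx) Y

lemma sop_star_mul_star (s : StarOperation D K) {X Y : FractionalIdeal D⁰ K} (hX : X ≠ 0)
    (hY : Y ≠ 0) : s.star (X * s.star Y) = s.star (X * Y) := by
  have hXY : X * Y ≠ 0 := FI_mul_ne_zero hX hY
  have hle : X * Y ≤ X * s.star Y := mul_le_mul_right (s.le_star Y hY) X
  have hXsY : X * s.star Y ≠ 0 := FI_ne_zero_of_le hXY hle
  refine le_antisymm ?_ (s.star_mono _ _ hXY hXsY hle)
  have := s.star_mono _ _ hXsY (sop_star_ne_zero s hXY) (mul_star_le s hX hY)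
  rwa [s.star_star _ hXY] at this

lemma part1 (s : StarOperation D K) (hd : s.IsStarDedekind) : s.IsSharp := by
  refine isSharpOp_of s.star (fun I hI => s.le_star I hI) s.star_mono ?_
  intro N hN X hX
  have hcN : (N : FractionalIdeal D⁰ K) ≠ 0 := FractionalIdeal.coeIdeal_ne_zero.mpr hN
  have hNN : (N : FractionalIdeal D⁰ K) * (N : FractionalIdeal D⁰ K)⁻¹ ≠ 0 :=
    FI_mul_ne_zero hcN (inv_ne_zero' hcN)
  rw [← sop_star_mul_star s hX hNN, hd _ hcN, mul_one]

end StarHelpers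
section KrullHelpers

variable {D : Type*} [CommRing D] [IsDomain D]

/-- Membership in the localization at `P`, phrased inside the fraction field. -/
def memLoc (P : Ideal D) (x : FractionRing D) : Prop :=
  ∃ s : D, s ∉ P ∧ ∃ a : D,
    algebraMap D (FractionRing D) a = algebraMap D (FractionRing D) s * x

lemma memLoc_mul {P : Ideal D} (hP : P.IsPrime) {x y : FractionRing D}
    (hx : memLoc P x) (hy : memLoc P y) : memLoc P (x * y) := by
  obtain ⟨s1, hs1, a1, h1⟩ := hx
  obtain ⟨s2, hs2, a2, h2⟩ := hy
  refine ⟨s1 * s2, fun h => (hP.mem_or_mem h).elim hs1 hs2, a1 * a2, ?_⟩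
  rw [map_mul, map_mul, h1, h2]; ring

lemma memLoc_algebraMap {P : Ideal D} (hP : P.IsPrime) (a : D) :
    memLoc P (algebraMap D (FractionRing D) a) :=
  ⟨1, fun h => hP.ne_top (Ideal.eq_top_of_isUnit_mem P h isUnit_one), a,
    by rw [map_one, one_mul]⟩

lemma memLoc_inv {P : Ideal D} (hP : P.IsPrime) {x : D} (hx : x ∉ P) :
    memLoc P (algebraMap D (FractionRing D) x)⁻¹ := by
  have hx0 : x ≠ 0 := fun h => hx (h ▸ P.zero_mem)
  have hne : algebraMap D (FractionRing D) x ≠ 0 :=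
    IsFractionRing.to_map_ne_zero_of_mem_nonZeroDivisors (mem_nonZeroDivisors_of_ne_zero hx0)
  exact ⟨x, hx, 1, by rw [map_one, mul_inv_cancel₀ hne]⟩

lemma exists_dvd_all_finset {A : Type*} [CommRing A] [IsDomain A] [ValuationRing A] :
    ∀ t : Finset A, t.Nonempty → ∃ m ∈ t, ∀ a ∈ t, m ∣ a := by
  classical
  intro t
  induction t using Finset.induction_on with
  | empty => intro ht; simp at ht
  | @insert x s hxs ih =>
    intro _
    rcases s.eq_empty_or_nonempty with rfl | hs
    · exact ⟨x, by simp, by simp⟩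
    · obtain ⟨m, hm, hdvd⟩ := ih hs
      rcases ValuationRing.dvd_total m x with h | h
      · refine ⟨m, Finset.mem_insert_of_mem hm, fun a ha => ?_⟩
        rcases Finset.mem_insert.mp ha with rfl | ha'
        · exact h
        · exact hdvd a ha'
      · refine ⟨x, Finset.mem_insert_self x s, fun a ha => ?_⟩
        rcases Finset.mem_insert.mp ha with rfl | ha'
        · exact dvd_rfl
        · exact h.trans (hdvd a ha')

lemma exists_span_dvd {A : Type*} [CommRing A] [IsDomain A] [ValuationRing A]
    [IsPrincipalIdealRing A] (S : Set A) (hS : ∃ a ∈ S, a ≠ 0) :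
    ∃ s0 ∈ S, ∀ a ∈ S, s0 ∣ a := by
  classical
  obtain ⟨g, hgspan⟩ := (IsPrincipalIdealRing.principal (Ideal.span S)).principal
  have hgdvd : ∀ a ∈ S, g ∣ a := by
    intro a ha
    have h := Ideal.subset_span (α := A) ha
    rw [hgspan] at h
    exact Ideal.mem_span_singleton.mp h
  have hg' : g ∈ Ideal.span S := by
    rw [hgspan]; exact Submodule.mem_span_singleton_self g
  rw [Ideal.span, Submodule.mem_span_set] at hg'
  obtain ⟨cf, hsupp, hsum⟩ := hg'
  rcases cf.support.eq_empty_or_nonempty with he | hne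
  · exfalso
    obtain ⟨a, haS, ha0⟩ := hS
    have hg0 : g = 0 := by rw [← hsum, Finsupp.sum, he]; simp
    exact ha0 (zero_dvd_iff.mp (hg0 ▸ hgdvd a haS))
  · obtain ⟨m, hm, hdvd⟩ := exists_dvd_all_finset cf.support hne
    refine ⟨m, hsupp hm, fun a ha => dvd_trans ?_ (hgdvd a ha)⟩
    rw [← hsum, Finsupp.sum]
    exact Finset.dvd_sum fun i hi => by
      rw [smul_eq_mul]; exact Dvd.dvd.mul_left (hdvd i hi) (cf i)

lemma krull_localization_facts (hK : IsKrullDomain D) {P : Ideal D}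
    (hP : IsHeightOnePrime P) :
    (∀ c x : FractionRing D, c ≠ 0 →
      (∀ n : ℕ, ∃ d : D, algebraMap D (FractionRing D) d = c * x ^ n) → memLoc P x) ∧
    (∀ X' : Ideal D, X' ≠ ⊥ → ∃ ξ0 ∈ X', ∀ ξ ∈ X', ∃ cc : FractionRing D,
      memLoc P cc ∧ algebraMap D (FractionRing D) ξ
        = algebraMap D (FractionRing D) ξ0 * cc) := by
  classical
  obtain ⟨hP1, hdom, hdvr⟩ := hK.1 P hP
  haveI := hP1
  haveI := hdom
  haveI := hdvr
  haveI : ValuationRing (Localization.AtPrime P) := inferInstance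
  have hunit : ∀ s : P.primeCompl, IsUnit (algebraMap D (FractionRing D) s) := by
    intro s
    have hs0 : (s : D) ≠ 0 := fun h0 => s.2 (h0 ▸ P.zero_mem)
    exact isUnit_iff_ne_zero.mpr (IsFractionRing.to_map_ne_zero_of_mem_nonZeroDivisors
      (mem_nonZeroDivisors_of_ne_zero hs0))
  set f : Localization.AtPrime P →+* FractionRing D := IsLocalization.lift hunit with hf
  have hfalg : ∀ d : D, f (algebraMap D (Localization.AtPrime P) d)
      = algebraMap D (FractionRing D) d := fun d => IsLocalization.lift_eq hunit d
  have hrange : ∀ a : Localization.AtPrime P, memLoc P (f a) := by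
    intro a
    obtain ⟨⟨d, s⟩, hds⟩ := IsLocalization.surj P.primeCompl a
    refine ⟨s, s.2, d, ?_⟩
    rw [← hfalg d, ← hds, map_mul, hfalg]
    ring
  have hinj : Function.Injective f := by
    rw [injective_iff_map_eq_zero]
    intro a ha
    obtain ⟨⟨d, s⟩, hds⟩ := IsLocalization.surj P.primeCompl a
    have hd : algebraMap D (FractionRing D) d = 0 := by
      rw [← hfalg d, ← hds, map_mul, ha, zero_mul]
    have hd0 : d = 0 := by
      apply IsFractionRing.injective D (FractionRing D)
      rw [hd, map_zero]
    rw [hd0, map_zero] at hds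
    have hu := IsLocalization.map_units (Localization.AtPrime P) s
    exact (IsUnit.mul_left_eq_zero hu).mp hds
  constructor
  · intro c x hc hcx
    rcases eq_or_ne x 0 with rfl | hx0
    · exact ⟨1, fun h => hP1.ne_top (Ideal.eq_top_of_isUnit_mem P h isUnit_one), 0, by simp⟩
    obtain ⟨p, q, hq, hpq⟩ := IsFractionRing.div_surjective (A := D) x
    have hq0 : algebraMap D (FractionRing D) q ≠ 0 :=
      IsFractionRing.to_map_ne_zero_of_mem_nonZeroDivisors hq
    have hp0 : algebraMap D (FractionRing D) p ≠ 0 := by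
      intro h0; rw [h0, zero_div] at hpq; exact hx0 hpq.symm
    obtain ⟨t, ht | ht⟩ := ValuationRing.cond (algebraMap D (Localization.AtPrime P) p)
      (algebraMap D (Localization.AtPrime P) q)
    · -- `p·t = q` in the localization, so `f t = x⁻¹`
      have hft : algebraMap D (FractionRing D) p * f t = algebraMap D (FractionRing D) q := by
        rw [← hfalg p, ← map_mul, ht, hfalg]
      have hftx : f t * x = 1 := by
        have hft' : f t = algebraMap D (FractionRing D) q / algebraMap D (FractionRing D) p :=
          (eq_div_iff hp0).mpr (by rw [← hft]; ring)
        rw [hft', ← hpq]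
        field_simp
      by_cases hu : IsUnit t
      · obtain ⟨u, rfl⟩ := hu
        have hx : x = f ↑u⁻¹ := by
          have h1 : f ↑u⁻¹ * (f ↑u * x) = f ↑u⁻¹ * 1 := by rw [hftx]
          rw [← mul_assoc, ← map_mul, Units.inv_mul, map_one, one_mul, mul_one] at h1
          exact h1
        rw [hx]; exact hrange _
      · exfalso
        have htm : t ∈ IsLocalRing.maximalIdeal (Localization.AtPrime P) :=
          (IsLocalRing.mem_maximalIdeal t).mpr hu
        have hkey : ∀ n : ℕ, ∃ d : D,
            c = f (algebraMap D (Localization.AtPrime P) d * t ^ n) := by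
          intro n
          obtain ⟨d, hd⟩ := hcx n
          refine ⟨d, ?_⟩
          rw [map_mul, hfalg, map_pow]
          have hxn : (f t) ^ n * x ^ n = 1 := by rw [← mul_pow, hftx, one_pow]
          calc c = c * (x ^ n * f t ^ n) := by rw [mul_comm (x ^ n), hxn, mul_one]
          _ = algebraMap D (FractionRing D) d * f t ^ n := by rw [← mul_assoc, ← hd]
        obtain ⟨d0, hd0⟩ := hkey 0
        have hc0 : c = f (algebraMap D (Localization.AtPrime P) d0) := by
          rw [hd0, pow_zero, mul_one]
        have hmem : ∀ n : ℕ, algebraMap D (Localization.AtPrime P) d0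
            ∈ IsLocalRing.maximalIdeal (Localization.AtPrime P) ^ n := by
          intro n
          obtain ⟨dn, hdn⟩ := hkey n
          have heq : algebraMap D (Localization.AtPrime P) d0
              = algebraMap D (Localization.AtPrime P) dn * t ^ n := by
            apply hinj
            rw [← hc0, hdn, map_mul]
          rw [heq]
          exact Ideal.mul_mem_left _ _ (Ideal.pow_mem_pow htm n)
        have hbot : algebraMap D (Localization.AtPrime P) d0 = 0 := by
          have h1 : algebraMap D (Localization.AtPrime P) d0
              ∈ (⊥ : Ideal (Localization.AtPrime P)) := by
            rw [← Ideal.iInf_pow_eq_bot_of_isDomain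
              (I := IsLocalRing.maximalIdeal (Localization.AtPrime P))
              (Ideal.IsMaximal.ne_top (IsLocalRing.maximalIdeal.isMaximal _))]
            exact Submodule.mem_iInf _ |>.mpr hmem
          simpa using h1
        exact hc (by rw [hc0, hbot, map_zero])
    · -- `q·t = p` in the localization, so `x = f t`
      have hft : algebraMap D (FractionRing D) q * f t = algebraMap D (FractionRing D) p := by
        rw [← hfalg q, ← map_mul, ht, hfalg]
      have hx : x = f t := by
        rw [← hpq, div_eq_iff hq0, ← hft]
        ring
      rw [hx]; exact hrange t
  · intro X' hX'
    have hsub : P.primeCompl ≤ D⁰ := fun s hs =>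
      mem_nonZeroDivisors_of_ne_zero fun h0 => hs (h0 ▸ P.zero_mem)
    have halgA_inj : Function.Injective (algebraMap D (Localization.AtPrime P)) :=
      IsLocalization.injective (Localization.AtPrime P) hsub
    obtain ⟨x, hxX, hx0⟩ := (Submodule.ne_bot_iff X').mp hX'
    obtain ⟨s0, hs0mem, hs0⟩ := exists_span_dvd
      ((algebraMap D (Localization.AtPrime P)) '' (X' : Set D))
      ⟨algebraMap D (Localization.AtPrime P) x, Set.mem_image_of_mem _ hxX,
        fun h0 => hx0 (halgA_inj (by rw [h0, map_zero]))⟩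
    obtain ⟨ξ0, hξ0X, rfl⟩ := hs0mem
    refine ⟨ξ0, hξ0X, fun ξ hξ => ?_⟩
    obtain ⟨t, ht⟩ := hs0 _ (Set.mem_image_of_mem _ hξ)
    refine ⟨f t, hrange t, ?_⟩
    rw [← hfalg ξ, ht, map_mul, hfalg]

end KrullHelpers
section TOpHelpers

variable {D K : Type*} [CommRing D] [IsDomain D] [Field K] [Algebra D K] [IsFractionRing D K]

lemma vOp_le_tOp {I J : FractionalIdeal D⁰ K} (hfg : (J : Submodule D K).FG) (hJI : J ≤ I) :
    vOp J ≤ tOp I := by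
  rw [← FractionalIdeal.coe_le_coe]
  exact le_iSup (fun J' : {J' : FractionalIdeal D⁰ K // (J' : Submodule D K).FG ∧ J' ≤ I} =>
    ((vOp (J'.1) : FractionalIdeal D⁰ K) : Submodule D K)) ⟨J, hfg, hJI⟩

lemma tOp_le {I X : FractionalIdeal D⁰ K}
    (h : ∀ J : FractionalIdeal D⁰ K, (J : Submodule D K).FG → J ≤ I → vOp J ≤ X) :
    tOp I ≤ X := by
  rw [← FractionalIdeal.coe_le_coe]
  exact iSup_le fun J' => FractionalIdeal.coe_le_coe.mpr (h J'.1 J'.2.1 J'.2.2)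

lemma le_tOp {I : FractionalIdeal D⁰ K} : I ≤ tOp I := by
  intro x hx
  rcases eq_or_ne x 0 with rfl | hx0
  · exact Submodule.zero_mem _
  have hJ0 : FractionalIdeal.spanSingleton D⁰ x ≠ 0 :=
    FractionalIdeal.spanSingleton_ne_zero_iff.mpr hx0
  have hfg : ((FractionalIdeal.spanSingleton D⁰ x : FractionalIdeal D⁰ K)
      : Submodule D K).FG := by
    rw [FractionalIdeal.coe_spanSingleton]
    exact Submodule.fg_span_singleton x
  have hmem : FractionalIdeal.spanSingleton D⁰ x ≤ I :=
    FractionalIdeal.spanSingleton_le_iff_mem.mpr hx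
  exact vOp_le_tOp hfg hmem (le_vOp hJ0 (FractionalIdeal.mem_spanSingleton_self D⁰ x))

lemma tOp_mono2 {I J : FractionalIdeal D⁰ K} (h : I ≤ J) : tOp I ≤ tOp J :=
  tOp_le fun _ hfg hle => vOp_le_tOp hfg (hle.trans h)

end TOpHelpers

section KrullMain

variable {D : Type*} [CommRing D] [IsDomain D]

lemma krull_cic (hK : IsKrullDomain D) {c x : FractionRing D} (hc : c ≠ 0)
    (h : ∀ n : ℕ, ∃ d : D, algebraMap D (FractionRing D) d = c * x ^ n) :
    ∃ d : D, algebraMap D (FractionRing D) d = x :=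
  hK.2.1 x fun _ hP => (krull_localization_facts hK hP).1 c x hc h

lemma krull_inv_inv (hK : IsKrullDomain D) (N : Ideal D) (hN : N ≠ 0) :
    ((N : FractionalIdeal D⁰ (FractionRing D)) *
      (N : FractionalIdeal D⁰ (FractionRing D))⁻¹)⁻¹ ≤ 1 := by
  set cN : FractionalIdeal D⁰ (FractionRing D) := (N : FractionalIdeal D⁰ (FractionRing D))
    with hcNdef
  have hcN : cN ≠ 0 := FractionalIdeal.coeIdeal_ne_zero.mpr hN
  have hinv : cN⁻¹ ≠ 0 := inv_ne_zero' hcN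
  have hX : cN * cN⁻¹ ≠ 0 := FI_mul_ne_zero hcN hinv
  intro y hy
  have hy' : ∀ z ∈ cN * cN⁻¹, y * z ∈ (1 : FractionalIdeal D⁰ (FractionRing D)) :=
    (FractionalIdeal.mem_inv_iff hX).mp hy
  have hstep : ∀ z ∈ cN⁻¹, y * z ∈ cN⁻¹ := by
    intro z hz
    refine (FractionalIdeal.mem_inv_iff hcN).mpr fun w hw => ?_
    have h1 := hy' _ (FractionalIdeal.mul_mem_mul hw hz)
    have heq : y * z * w = y * (w * z) := by ring
    rw [heq]; exact h1
  have hpow : ∀ n : ℕ, ∀ z ∈ cN⁻¹, y ^ n * z ∈ cN⁻¹ := by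
    intro n
    induction n with
    | zero => intro z hz; simpa using hz
    | succ n ih =>
      intro z hz
      have h2 := ih _ (hstep z hz)
      have heq : y ^ (n + 1) * z = y ^ n * (y * z) := by ring
      rw [heq]; exact h2
  obtain ⟨z0, hz0, hz00⟩ := FI_exists_ne_zero hinv
  obtain ⟨d, hd, hfrac⟩ := (cN⁻¹).isFractional
  have hd0 : algebraMap D (FractionRing D) d ≠ 0 :=
    IsFractionRing.to_map_ne_zero_of_mem_nonZeroDivisors hd
  have hc0 : algebraMap D (FractionRing D) d * z0 ≠ 0 := mul_ne_zero hd0 hz00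
  have harg : ∀ n : ℕ, ∃ e : D, algebraMap D (FractionRing D) e
      = (algebraMap D (FractionRing D) d * z0) * y ^ n := by
    intro n
    obtain ⟨e, he⟩ := hfrac (y ^ n * z0) (hpow n z0 hz0)
    refine ⟨e, ?_⟩
    rw [Algebra.smul_def] at he
    rw [he]; ring
  obtain ⟨d', hd'⟩ := krull_cic hK hc0 harg
  exact (FractionalIdeal.mem_one_iff D⁰).mpr ⟨d', hd'⟩

lemma krull_core (hK : IsKrullDomain D) (N : Ideal D) (hN : N ≠ 0) :
    ∃ G : FractionalIdeal D⁰ (FractionRing D), G ≠ 0 ∧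
      (G : Submodule D (FractionRing D)).FG ∧
      G ≤ (N : FractionalIdeal D⁰ (FractionRing D)) *
        (N : FractionalIdeal D⁰ (FractionRing D))⁻¹ ∧ G⁻¹ ≤ 1 := by
  classical
  have hcN : (N : FractionalIdeal D⁰ (FractionRing D)) ≠ 0 :=
    FractionalIdeal.coeIdeal_ne_zero.mpr hN
  have hX : (N : FractionalIdeal D⁰ (FractionRing D)) *
      (N : FractionalIdeal D⁰ (FractionRing D))⁻¹ ≠ 0 :=
    FI_mul_ne_zero hcN (inv_ne_zero' hcN)
  have hXle1 : (N : FractionalIdeal D⁰ (FractionRing D)) *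
      (N : FractionalIdeal D⁰ (FractionRing D))⁻¹ ≤ 1 := mul_inv_le_one' hN
  obtain ⟨X', hX'eq⟩ := FractionalIdeal.le_one_iff_exists_coeIdeal.mp hXle1
  have hX'0 : X' ≠ ⊥ := by
    intro h0; rw [h0] at hX'eq; exact hX (by rw [← hX'eq]; simp)
  obtain ⟨x, hxX, hx0⟩ := (Submodule.ne_bot_iff X').mp hX'0
  have hfin := hK.2.2 x hx0
  have hchoice : ∀ P : Ideal D, ∃ ξ0 : D, ξ0 ∈ X' ∧ (IsHeightOnePrime P →
      ∀ ξ ∈ X', ∃ cc : FractionRing D, memLoc P cc ∧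
        algebraMap D (FractionRing D) ξ = algebraMap D (FractionRing D) ξ0 * cc) := by
    intro P
    by_cases hP : IsHeightOnePrime P
    · obtain ⟨ξ0, hξ0, hdiv⟩ := (krull_localization_facts hK hP).2 X' hX'0
      exact ⟨ξ0, hξ0, fun _ => hdiv⟩
    · exact ⟨x, hxX, fun h => absurd h hP⟩
  choose ξf hξmem hξdiv using hchoice
  set Sgen : Set D := insert x (ξf '' {P : Ideal D | IsHeightOnePrime P ∧ x ∈ P}) with hSgen
  have hSgenfin : Sgen.Finite := (hfin.image ξf).insert x
  set G' : Ideal D := Ideal.span Sgen with hG'def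
  have hG'fg : G'.FG := Submodule.fg_span hSgenfin
  have hG'le : G' ≤ X' := by
    rw [hG'def, Ideal.span_le]
    rintro a (rfl | ⟨P, _, rfl⟩)
    · exact hxX
    · exact hξmem P
  have hxG' : x ∈ G' := Ideal.subset_span (Set.mem_insert x _)
  have hG'0 : G' ≠ ⊥ := fun h0 => hx0 (by rw [h0] at hxG'; simpa using hxG')
  have hcG : (G' : FractionalIdeal D⁰ (FractionRing D)) ≠ 0 :=
    FractionalIdeal.coeIdeal_ne_zero.mpr hG'0
  refine ⟨(G' : FractionalIdeal D⁰ (FractionRing D)), hcG, ?_, ?_, ?_⟩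
  · show (Submodule.map (Algebra.linearMap D (FractionRing D)) G').FG
    exact Submodule.FG.map (Algebra.linearMap D (FractionRing D)) hG'fg
  · rw [← hX'eq]
    exact (FractionalIdeal.coeIdeal_le_coeIdeal _).mpr hG'le
  · intro y hy
    have hy' : ∀ g ∈ (G' : FractionalIdeal D⁰ (FractionRing D)), y * g ∈
        (1 : FractionalIdeal D⁰ (FractionRing D)) :=
      (FractionalIdeal.mem_inv_iff hcG).mp hy
    have hyx : ∃ dx : D, algebraMap D (FractionRing D) dx
        = y * algebraMap D (FractionRing D) x :=
      (FractionalIdeal.mem_one_iff D⁰).mp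
        (hy' _ ((FractionalIdeal.mem_coeIdeal _).mpr ⟨x, hxG', rfl⟩))
    have key : ∀ ξ ∈ X', y * algebraMap D (FractionRing D) ξ ∈
        (1 : FractionalIdeal D⁰ (FractionRing D)) := by
      intro ξ hξ
      have hmem : ∀ P : Ideal D, IsHeightOnePrime P →
          memLoc P (y * algebraMap D (FractionRing D) ξ) := by
        intro P hPht
        by_cases hxP : x ∈ P
        · have hPS : P ∈ {P : Ideal D | IsHeightOnePrime P ∧ x ∈ P} := ⟨hPht, hxP⟩
          obtain ⟨cc, hcc, heq⟩ := hξdiv P hPht ξ hξ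
          have hmemG : ξf P ∈ G' :=
            Ideal.subset_span (Set.mem_insert_iff.mpr (Or.inr ⟨P, hPS, rfl⟩))
          obtain ⟨d2, hd2⟩ := (FractionalIdeal.mem_one_iff D⁰).mp
            (hy' _ ((FractionalIdeal.mem_coeIdeal _).mpr ⟨ξf P, hmemG, rfl⟩))
          have hrw : y * algebraMap D (FractionRing D) ξ
              = algebraMap D (FractionRing D) d2 * cc := by
            rw [heq, hd2]; ring
          rw [hrw]
          exact memLoc_mul hPht.1 (memLoc_algebraMap hPht.1 d2) hcc
        · obtain ⟨dx, hdx⟩ := hyx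
          have hx0' : algebraMap D (FractionRing D) x ≠ 0 :=
            IsFractionRing.to_map_ne_zero_of_mem_nonZeroDivisors
              (mem_nonZeroDivisors_of_ne_zero hx0)
          have hrw : y * algebraMap D (FractionRing D) ξ
              = algebraMap D (FractionRing D) dx *
                ((algebraMap D (FractionRing D) x)⁻¹ * algebraMap D (FractionRing D) ξ) := by
            rw [hdx]
            field_simp
          rw [hrw]
          exact memLoc_mul hPht.1 (memLoc_algebraMap hPht.1 dx)
            (memLoc_mul hPht.1 (memLoc_inv hPht.1 hxP) (memLoc_algebraMap hPht.1 ξ))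
      obtain ⟨d, hd⟩ := hK.2.1 _ hmem
      exact (FractionalIdeal.mem_one_iff D⁰).mpr ⟨d, hd⟩
    have hyX : y ∈ ((N : FractionalIdeal D⁰ (FractionRing D)) *
        (N : FractionalIdeal D⁰ (FractionRing D))⁻¹)⁻¹ := by
      refine (FractionalIdeal.mem_inv_iff hX).mpr fun z hz => ?_
      rw [← hX'eq] at hz
      obtain ⟨ξ, hξ, rfl⟩ := (FractionalIdeal.mem_coeIdeal _).mp hz
      exact key ξ hξ
    exact krull_inv_inv hK N hN hyX

lemma krull_tOp_h3 (hK : IsKrullDomain D) (N : Ideal D) (hN : N ≠ 0)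
    (X : FractionalIdeal D⁰ (FractionRing D)) (_hX : X ≠ 0) :
    tOp (X * ((N : FractionalIdeal D⁰ (FractionRing D)) *
      (N : FractionalIdeal D⁰ (FractionRing D))⁻¹)) = tOp X := by
  refine le_antisymm (tOp_mono2 ?_) ?_
  · calc X * ((N : FractionalIdeal D⁰ (FractionRing D)) *
        (N : FractionalIdeal D⁰ (FractionRing D))⁻¹)
        ≤ X * 1 := mul_le_mul_right (mul_inv_le_one' hN) X
    _ = X := mul_one X
  · obtain ⟨G, hG0, hGfg, hGle, hGinv⟩ := krull_core hK N hN
    refine tOp_le fun J hJfg hJX => ?_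
    rcases eq_or_ne J 0 with rfl | hJ0
    · rw [vOp, FractionalIdeal.inv_zero', FractionalIdeal.inv_zero']
      exact FractionalIdeal.zero_le _
    have hJG0 : J * G ≠ 0 := FI_mul_ne_zero hJ0 hG0
    have hJGfg : ((J * G : FractionalIdeal D⁰ (FractionRing D))
        : Submodule D (FractionRing D)).FG := by
      rw [FractionalIdeal.coe_mul]
      exact Submodule.FG.mul hJfg hGfg
    have hJGle : J * G ≤ X * ((N : FractionalIdeal D⁰ (FractionRing D)) *
        (N : FractionalIdeal D⁰ (FractionRing D))⁻¹) := by
      rw [FractionalIdeal.mul_le]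
      intro j hj g hg
      exact FractionalIdeal.mul_mem_mul (hJX hj) (hGle hg)
    have hanti : (J * G)⁻¹ ≤ J⁻¹ := by
      intro y hy
      have hy' := (FractionalIdeal.mem_inv_iff hJG0).mp hy
      refine (FractionalIdeal.mem_inv_iff hJ0).mpr fun j hj => ?_
      refine hGinv ((FractionalIdeal.mem_inv_iff hG0).mpr fun g hg => ?_)
      have h1 := hy' _ (FractionalIdeal.mul_mem_mul hj hg)
      have heq : y * j * g = y * (j * g) := by ring
      rw [heq]; exact h1
    have hvle : vOp J ≤ vOp (J * G) :=
      FractionalIdeal.inv_anti_mono (inv_ne_zero' hJG0) (inv_ne_zero' hJ0) hanti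
    exact hvle.trans (vOp_le_tOp hJGfg hJGle)

end KrullMain

/-- If `*` is a star operation on `D` and `D` is `*`-Dedekind, then
`D` is `*`-sharp. In particular, every Krull domain is `t`-sharp. -/
theorem statement3 (D : Type*) [CommRing D] [IsDomain D]
    (K : Type*) [Field K] [Algebra D K] [IsFractionRing D K]
    (s : StarOperation D K) :
    (s.IsStarDedekind → s.IsSharp) ∧ (IsKrullDomain D → IsTSharp D) := by
  constructor
  · exact fun hd => part1 s hd
  · intro hK
    exact isSharpOp_of (D := D) (K := FractionRing D) tOp (fun I _ => le_tOp)
      (fun I J _ _ h => tOp_mono2 h)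
      (fun N hN X hX => krull_tOp_h3 hK N hN X hX)
end

section
/- Let D be an integral domain and * a stable star operation of finite character on D such that D is *-sharp. If D is a TV domain (for instance, a Mori domain), then D is *-Dedekind. -/
open scoped nonZeroDivisors

section StarSharpDefs

variable {D K : Type*} [CommRing D] [IsDomain D] [Field K] [Algebra D K] [IsFractionRing D K]

/-- A star operation is stable if it distributes over (finite) intersections of
nonzero fractional ideals. -/
def StarOperation.IsStable (s : StarOperation D K) : Prop :=
  ∀ I J : FractionalIdeal D⁰ K, I ≠ 0 → J ≠ 0 → s.star (I ⊓ J) = s.star I ⊓ s.star J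

/-- A star operation has finite character if `I*` is the union of `H*` over the
nonzero finitely generated subideals `H` of `I`. -/
def StarOperation.HasFiniteCharacter (s : StarOperation D K) : Prop :=
  ∀ I : FractionalIdeal D⁰ K, I ≠ 0 → ∀ x ∈ s.star I,
    ∃ H : FractionalIdeal D⁰ K, H ≠ 0 ∧ (H : Submodule D K).FG ∧ H ≤ I ∧ x ∈ s.star H

end StarSharpDefs

set_option linter.unusedSectionVars false
set_option maxHeartbeats 1000000

section Aux

open FractionalIdeal

variable {D K : Type*} [CommRing D] [IsDomain D] [Field K] [Algebra D K] [IsFractionRing D K]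

namespace Statement5Aux

/-- a nonzero fractional ideal has a nonzero element -/
lemma exists_ne_zero_mem {I : FractionalIdeal D⁰ K} (hI : I ≠ 0) : ∃ x ∈ I, x ≠ (0 : K) := by
  have hne : (I : Submodule D K) ≠ ⊥ := by
    intro h
    apply hI
    apply coeToSubmodule_injective
    show (I : Submodule D K) = ((0 : FractionalIdeal D⁰ K) : Submodule D K)
    rw [h, coe_zero]
  obtain ⟨x, hx, hx0⟩ := (Submodule.ne_bot_iff _).mp hne
  exact ⟨x, hx, hx0⟩

lemma mul_ne_zero' {I J : FractionalIdeal D⁰ K} (hI : I ≠ 0) (hJ : J ≠ 0) : I * J ≠ 0 := by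
  obtain ⟨x, hx, hx0⟩ := exists_ne_zero_mem hI
  obtain ⟨y, hy, hy0⟩ := exists_ne_zero_mem hJ
  intro h
  have : x * y ∈ I * J := mul_mem_mul hx hy
  rw [h, mem_zero_iff] at this
  exact (mul_ne_zero hx0 hy0) this

lemma ne_zero_of_le {I J : FractionalIdeal D⁰ K} (hI : I ≠ 0) (h : I ≤ J) : J ≠ 0 := fun h0 =>
  hI (le_antisymm (h0 ▸ h) (zero_le _))

lemma sup_ne_zero_left {I J : FractionalIdeal D⁰ K} (hI : I ≠ 0) : I ⊔ J ≠ 0 :=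
  ne_zero_of_le hI le_sup_left

lemma sup_ne_zero_right {I J : FractionalIdeal D⁰ K} (hJ : J ≠ 0) : I ⊔ J ≠ 0 :=
  ne_zero_of_le hJ le_sup_right

lemma inf_ne_zero {W I J : FractionalIdeal D⁰ K} (hW : W ≠ 0) (h1 : W ≤ I) (h2 : W ≤ J) :
    I ⊓ J ≠ 0 :=
  ne_zero_of_le hW (le_inf h1 h2)

/-- monotonicity of multiplication -/
lemma mul_le_mul'' {I J I' J' : FractionalIdeal D⁰ K} (h : I ≤ J) (h' : I' ≤ J') :
    I * I' ≤ J * J' :=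
  mul_le.mpr fun x hx y hy => mul_mem_mul (h hx) (h' hy)

lemma sup_mul_distrib (I J C : FractionalIdeal D⁰ K) : (I ⊔ J) * C = I * C ⊔ J * C := by
  rw [sup_eq_add, sup_eq_add, add_mul]

lemma mul_sup_distrib (C I J : FractionalIdeal D⁰ K) : C * (I ⊔ J) = C * I ⊔ C * J := by
  rw [sup_eq_add, sup_eq_add, mul_add]

lemma spanSingleton_mul_spanSingleton_inv {x : K} (hx : x ≠ 0) :
    spanSingleton D⁰ x * spanSingleton D⁰ x⁻¹ = 1 := by
  rw [spanSingleton_mul_spanSingleton, mul_inv_cancel₀ hx, spanSingleton_one]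

lemma spanSingleton_inv_mul_cancel {x : K} (hx : x ≠ 0) (I : FractionalIdeal D⁰ K) :
    spanSingleton D⁰ x * (spanSingleton D⁰ x⁻¹ * I) = I := by
  rw [← mul_assoc, spanSingleton_mul_spanSingleton_inv hx, one_mul]

lemma spanSingleton_inv_mul_cancel' {x : K} (hx : x ≠ 0) (I : FractionalIdeal D⁰ K) :
    spanSingleton D⁰ x⁻¹ * (spanSingleton D⁰ x * I) = I := by
  rw [← mul_assoc, spanSingleton_mul_spanSingleton, inv_mul_cancel₀ hx, spanSingleton_one, one_mul]

lemma le_spanSingleton_mul_iff {x : K} (hx : x ≠ 0) {I J : FractionalIdeal D⁰ K} :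
    I ≤ spanSingleton D⁰ x * J ↔ spanSingleton D⁰ x⁻¹ * I ≤ J := by
  constructor
  · intro h
    have := mul_le_mul'' (le_refl (spanSingleton D⁰ x⁻¹)) h
    rwa [spanSingleton_inv_mul_cancel' hx] at this
  · intro h
    have := mul_le_mul'' (le_refl (spanSingleton D⁰ x)) h
    rwa [spanSingleton_inv_mul_cancel hx] at this

lemma spanSingleton_mul_cancel {x : K} (hx : x ≠ 0) {I J : FractionalIdeal D⁰ K}
    (h : spanSingleton D⁰ x * I = spanSingleton D⁰ x * J) : I = J := by
  have := congrArg (fun T => spanSingleton D⁰ x⁻¹ * T) h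
  simpa [spanSingleton_inv_mul_cancel' hx] using this

lemma inv_one' : (1 : FractionalIdeal D⁰ K)⁻¹ = 1 := by
  rw [inv_eq, FractionalIdeal.div_one]

lemma mul_inv_le_one' {I : FractionalIdeal D⁰ K} : I * I⁻¹ ≤ 1 := by
  rw [inv_eq]; exact mul_one_div_le_one

lemma inv_mul_le_one' {I : FractionalIdeal D⁰ K} : I⁻¹ * I ≤ 1 := by
  rw [mul_comm]; exact mul_inv_le_one'

lemma le_vOp' (I : FractionalIdeal D⁰ K) : I ≤ vOp I := by
  by_cases hI : I = 0
  · subst hI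
    show (0 : FractionalIdeal D⁰ K) ≤ vOp 0
    exact zero_le _
  · show I ≤ (I⁻¹)⁻¹
    rw [inv_eq (I := I⁻¹), le_div_iff_mul_le (inv_ne_zero' hI)]
    exact mul_inv_le_one'

lemma vOp_ne_zero {I : FractionalIdeal D⁰ K} (hI : I ≠ 0) : vOp I ≠ 0 :=
  ne_zero_of_le hI (le_vOp' I)

lemma inv_vOp (I : FractionalIdeal D⁰ K) : (vOp I)⁻¹ = I⁻¹ := by
  by_cases hI : I = 0
  · subst hI; show ((0 : FractionalIdeal D⁰ K)⁻¹⁻¹)⁻¹ = _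
    rw [inv_zero', inv_zero', inv_zero']
  · apply le_antisymm
    · exact inv_anti_mono hI (vOp_ne_zero hI) (le_vOp' I)
    · exact le_vOp' (I⁻¹)

lemma vOp_vOp (I : FractionalIdeal D⁰ K) : vOp (vOp I) = vOp I := by
  show ((vOp I)⁻¹)⁻¹ = vOp I
  rw [inv_vOp]; rfl

lemma vOp_mul_inv_le_one {I : FractionalIdeal D⁰ K} : vOp I * I⁻¹ ≤ 1 := by
  show (I⁻¹)⁻¹ * I⁻¹ ≤ 1
  rw [mul_comm]
  exact mul_inv_le_one' (I := (I⁻¹ : FractionalIdeal D⁰ K))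

lemma vOp_le_one {I : FractionalIdeal D⁰ K} (h : I ≤ 1) : vOp I ≤ 1 := by
  by_cases hI : I = 0
  · subst hI; show ((0 : FractionalIdeal D⁰ K)⁻¹)⁻¹ ≤ 1
    rw [inv_zero', inv_zero']; exact zero_le _
  · have h1 : (1 : FractionalIdeal D⁰ K) ≤ I⁻¹ := by
      have := inv_anti_mono hI (one_ne_zero' (FractionalIdeal D⁰ K)) h
      rwa [inv_one'] at this
    have h2 := inv_anti_mono (one_ne_zero' (FractionalIdeal D⁰ K)) (inv_ne_zero' hI) h1
    rw [inv_one'] at h2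
    exact h2

lemma sup_inv {I J : FractionalIdeal D⁰ K} (hI : I ≠ 0) (hJ : J ≠ 0) :
    (I ⊔ J)⁻¹ = I⁻¹ ⊓ J⁻¹ := by
  apply le_antisymm
  · exact le_inf (inv_anti_mono hI (sup_ne_zero_left hI) le_sup_left)
      (inv_anti_mono hJ (sup_ne_zero_left hI) le_sup_right)
  · show I⁻¹ ⊓ J⁻¹ ≤ 1 / (I ⊔ J)
    rw [le_div_iff_mul_le (sup_ne_zero_left hI), mul_sup_distrib]
    apply sup_le
    · exact le_trans (mul_le_mul'' inf_le_left (le_refl I)) inv_mul_le_one'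
    · exact le_trans (mul_le_mul'' inf_le_right (le_refl J)) inv_mul_le_one'

lemma inv_spanSingleton_mul {x : K} (hx : x ≠ 0) (I : FractionalIdeal D⁰ K) (hI : I ≠ 0) :
    (spanSingleton D⁰ x * I)⁻¹ = spanSingleton D⁰ x⁻¹ * I⁻¹ := by
  apply le_antisymm
  · have : spanSingleton D⁰ x * (spanSingleton D⁰ x * I)⁻¹ ≤ I⁻¹ := by
      show _ ≤ 1 / I
      rw [le_div_iff_mul_le hI]
      calc spanSingleton D⁰ x * (spanSingleton D⁰ x * I)⁻¹ * I
          = (spanSingleton D⁰ x * I) * (spanSingleton D⁰ x * I)⁻¹ := by ring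
        _ ≤ 1 := mul_inv_le_one'
    have h2 := mul_le_mul'' (le_refl (spanSingleton D⁰ x⁻¹)) this
    rwa [spanSingleton_inv_mul_cancel' hx] at h2
  · show _ ≤ 1 / (spanSingleton D⁰ x * I)
    rw [le_div_iff_mul_le (mul_ne_zero' (spanSingleton_ne_zero_iff.mpr hx) hI)]
    calc spanSingleton D⁰ x⁻¹ * I⁻¹ * (spanSingleton D⁰ x * I)
        = (spanSingleton D⁰ x⁻¹ * spanSingleton D⁰ x) * (I⁻¹ * I) := by ring
      _ = I⁻¹ * I := by
          rw [spanSingleton_mul_spanSingleton, inv_mul_cancel₀ hx, spanSingleton_one, one_mul]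
      _ ≤ 1 := inv_mul_le_one'

lemma vOp_spanSingleton_mul {x : K} (hx : x ≠ 0) (I : FractionalIdeal D⁰ K) (hI : I ≠ 0) :
    vOp (spanSingleton D⁰ x * I) = spanSingleton D⁰ x * vOp I := by
  show (spanSingleton D⁰ x * I)⁻¹⁻¹ = _
  rw [inv_spanSingleton_mul hx I hI, inv_spanSingleton_mul (inv_ne_zero hx) I⁻¹
    (inv_ne_zero' hI), inv_inv]
  rfl

lemma vOp_spanSingleton {x : K} (hx : x ≠ 0) :
    vOp (spanSingleton D⁰ x) = spanSingleton D⁰ x := by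
  have h := vOp_spanSingleton_mul (D := D) (K := K) hx 1 (one_ne_zero' (FractionalIdeal D⁰ K))
  rw [mul_one] at h
  rw [h]
  show spanSingleton D⁰ x * (1 : FractionalIdeal D⁰ K)⁻¹⁻¹ = _
  rw [inv_one', inv_one', mul_one]

lemma vOp_one : vOp (1 : FractionalIdeal D⁰ K) = 1 := by
  show ((1 : FractionalIdeal D⁰ K)⁻¹)⁻¹ = 1
  rw [inv_one', inv_one']

end Statement5Aux
end Aux

section Aux2

open FractionalIdeal

variable {D K : Type*} [CommRing D] [IsDomain D] [Field K] [Algebra D K] [IsFractionRing D K]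

namespace Statement5Aux

variable (s : StarOperation D K)

lemma star_ne_zero {I : FractionalIdeal D⁰ K} (hI : I ≠ 0) : s.star I ≠ 0 :=
  ne_zero_of_le hI (s.le_star I hI)

lemma star_le_one {I : FractionalIdeal D⁰ K} (hI : I ≠ 0) (h : I ≤ 1) : s.star I ≤ 1 := by
  have := s.star_mono I 1 hI (one_ne_zero' (FractionalIdeal D⁰ K)) h
  rwa [s.star_one] at this

lemma star_spanSingleton {x : K} (hx : x ≠ 0) :
    s.star (spanSingleton D⁰ x) = spanSingleton D⁰ x := by
  have := s.star_smul x hx 1 (one_ne_zero' (FractionalIdeal D⁰ K))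
  rwa [mul_one, s.star_one, mul_one] at this

/-- `I * J* ≤ (I*J)*` -/
lemma mul_star_le {I J : FractionalIdeal D⁰ K} (hI : I ≠ 0) (hJ : J ≠ 0) :
    I * s.star J ≤ s.star (I * J) := by
  refine mul_le.mpr fun x hx y hy => ?_
  by_cases hx0 : x = 0
  · subst hx0; rw [zero_mul]; exact zero_mem _
  have hmem : x * y ∈ spanSingleton D⁰ x * s.star J :=
    mul_mem_mul (mem_spanSingleton_self _ _) hy
  rw [← s.star_smul x hx0 J hJ] at hmem
  have hle : s.star (spanSingleton D⁰ x * J) ≤ s.star (I * J) :=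
    s.star_mono _ _ (mul_ne_zero' (spanSingleton_ne_zero_iff.mpr hx0) hJ) (mul_ne_zero' hI hJ)
      (mul_le_mul'' (spanSingleton_le_iff_mem.mpr hx) (le_refl J))
  exact hle hmem

lemma star_mul_le {I J : FractionalIdeal D⁰ K} (hI : I ≠ 0) (hJ : J ≠ 0) :
    s.star I * J ≤ s.star (I * J) := by
  rw [mul_comm, mul_comm I J]
  exact mul_star_le s hJ hI

/-- `(I * J*)* = (I*J)*` -/
lemma star_mul_star_right {I J : FractionalIdeal D⁰ K} (hI : I ≠ 0) (hJ : J ≠ 0) :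
    s.star (I * s.star J) = s.star (I * J) := by
  apply le_antisymm
  · have h1 := s.star_mono _ _ (mul_ne_zero' hI (star_ne_zero s hJ))
      (star_ne_zero s (mul_ne_zero' hI hJ)) (mul_star_le s hI hJ)
    rwa [s.star_star _ (mul_ne_zero' hI hJ)] at h1
  · exact s.star_mono _ _ (mul_ne_zero' hI hJ) (mul_ne_zero' hI (star_ne_zero s hJ))
      (mul_le_mul'' (le_refl I) (s.le_star J hJ))

lemma star_mul_star_left {I J : FractionalIdeal D⁰ K} (hI : I ≠ 0) (hJ : J ≠ 0) :
    s.star (s.star I * J) = s.star (I * J) := by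
  rw [mul_comm, mul_comm I J]
  exact star_mul_star_right s hJ hI

lemma star_sup_star_right {I J : FractionalIdeal D⁰ K} (hI : I ≠ 0) (hJ : J ≠ 0) :
    s.star (I ⊔ s.star J) = s.star (I ⊔ J) := by
  apply le_antisymm
  · have hle : I ⊔ s.star J ≤ s.star (I ⊔ J) := by
      apply sup_le
      · exact le_trans le_sup_left (s.le_star _ (sup_ne_zero_left hI))
      · exact s.star_mono _ _ hJ (sup_ne_zero_left hI) le_sup_right
    have h1 := s.star_mono _ _ (sup_ne_zero_left hI)
      (star_ne_zero s (sup_ne_zero_left hI)) hle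
    rwa [s.star_star _ (sup_ne_zero_left hI)] at h1
  · exact s.star_mono _ _ (sup_ne_zero_left hI) (sup_ne_zero_left hI)
      (sup_le_sup (le_refl I) (s.le_star J hJ))

lemma star_sup_star_left {I J : FractionalIdeal D⁰ K} (hI : I ≠ 0) (hJ : J ≠ 0) :
    s.star (s.star I ⊔ J) = s.star (I ⊔ J) := by
  rw [sup_comm, sup_comm I J]
  exact star_sup_star_right s hJ hI

lemma star_le_vOp {I : FractionalIdeal D⁰ K} (hI : I ≠ 0) : s.star I ≤ vOp I := by
  show _ ≤ (I⁻¹)⁻¹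
  rw [inv_eq (I := I⁻¹), le_div_iff_mul_le (inv_ne_zero' hI)]
  calc s.star I * I⁻¹ ≤ s.star (I * I⁻¹) := star_mul_le s hI (inv_ne_zero' hI)
    _ ≤ 1 := star_le_one s (mul_ne_zero' hI (inv_ne_zero' hI)) mul_inv_le_one'

lemma star_inv {I : FractionalIdeal D⁰ K} (hI : I ≠ 0) : s.star (I⁻¹) = I⁻¹ := by
  apply le_antisymm
  · have h := star_le_vOp s (inv_ne_zero' hI)
    have h2 : vOp (I⁻¹) = I⁻¹ := by
      show ((I⁻¹)⁻¹)⁻¹ = I⁻¹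
      have := inv_vOp (D := D) (K := K) I
      exact this
    rwa [h2] at h
  · exact s.le_star _ (inv_ne_zero' hI)

lemma star_vOp {I : FractionalIdeal D⁰ K} (hI : I ≠ 0) : s.star (vOp I) = vOp I :=
  star_inv s (inv_ne_zero' hI)

/-- scalar version of key absorption: if `x•W ≤ T` and `(W)* = 1` then `x ∈ T*` -/
lemma mem_star_of_smul_le {x : K} {W T : FractionalIdeal D⁰ K} (hW : W ≠ 0) (hT : T ≠ 0)
    (hstarW : s.star W = 1) (h : spanSingleton D⁰ x * W ≤ T) : x ∈ s.star T := by
  by_cases hx0 : x = 0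
  · subst hx0; exact zero_mem _
  rw [← spanSingleton_le_iff_mem]
  calc spanSingleton D⁰ x = spanSingleton D⁰ x * s.star W := by rw [hstarW, mul_one]
    _ = s.star (spanSingleton D⁰ x * W) := (s.star_smul x hx0 W hW).symm
    _ ≤ s.star T := s.star_mono _ _ (mul_ne_zero' (spanSingleton_ne_zero_iff.mpr hx0) hW) hT h

/-- star-invertibility from a witness -/
lemma sinv_of_witness {X W : FractionalIdeal D⁰ K} (hX : X ≠ 0) (hW : W ≠ 0)
    (h : s.star (X * W) = 1) : s.star (X * X⁻¹) = 1 := by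
  have hWle : W ≤ X⁻¹ := by
    show W ≤ 1 / X
    rw [le_div_iff_mul_le hX, mul_comm]
    calc X * W ≤ s.star (X * W) := s.le_star _ (mul_ne_zero' hX hW)
      _ = 1 := h
  apply le_antisymm
  · exact star_le_one s (mul_ne_zero' hX (inv_ne_zero' hX)) mul_inv_le_one'
  · calc (1 : FractionalIdeal D⁰ K) = s.star (X * W) := h.symm
      _ ≤ s.star (X * X⁻¹) := s.star_mono _ _ (mul_ne_zero' hX hW)
          (mul_ne_zero' hX (inv_ne_zero' hX)) (mul_le_mul'' (le_refl X) hWle)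

/-- star of a star-invertible ideal is its divisorial closure -/
lemma star_eq_vOp_of_sinv {X : FractionalIdeal D⁰ K} (hX : X ≠ 0)
    (hs : s.star (X * X⁻¹) = 1) : s.star X = vOp X := by
  apply le_antisymm (star_le_vOp s hX)
  intro x hx
  apply mem_star_of_smul_le s (mul_ne_zero' hX (inv_ne_zero' hX)) hX hs
  have hx' : spanSingleton D⁰ x * X⁻¹ ≤ 1 := by
    have h1 : spanSingleton D⁰ x ≤ vOp X := spanSingleton_le_iff_mem.mpr hx
    show _ ≤ 1
    calc spanSingleton D⁰ x * X⁻¹ ≤ vOp X * X⁻¹ := mul_le_mul'' h1 (le_refl _)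
      _ ≤ 1 := vOp_mul_inv_le_one
  calc spanSingleton D⁰ x * (X * X⁻¹) = (spanSingleton D⁰ x * X⁻¹) * X := by ring
    _ ≤ 1 * X := mul_le_mul'' hx' (le_refl X)
    _ = X := one_mul X

/-- star-invertibility transfers to the divisorial closure -/
lemma sinv_vOp_aux {X : FractionalIdeal D⁰ K} (hX : X ≠ 0)
    (hs : s.star (X * X⁻¹) = 1) : s.star (vOp X * (vOp X)⁻¹) = 1 := by
  rw [inv_vOp]
  apply le_antisymm
  · exact star_le_one s (mul_ne_zero' (vOp_ne_zero hX) (inv_ne_zero' hX)) vOp_mul_inv_le_one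
  · calc (1 : FractionalIdeal D⁰ K) = s.star (X * X⁻¹) := hs.symm
      _ ≤ _ := s.star_mono _ _ (mul_ne_zero' hX (inv_ne_zero' hX))
          (mul_ne_zero' (vOp_ne_zero hX) (inv_ne_zero' hX))
          (mul_le_mul'' (le_vOp' X) (le_refl _))

end Statement5Aux
end Aux2

section Aux3

open FractionalIdeal

variable {D K : Type*} [CommRing D] [IsDomain D] [Field K] [Algebra D K] [IsFractionRing D K]

namespace Statement5Aux

variable (s : StarOperation D K)

lemma coeIdeal_ne_zero_of_ne {A₀ : Ideal D} (h : (A₀ : FractionalIdeal D⁰ K) ≠ 0) : A₀ ≠ 0 := by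
  intro h0; apply h; rw [h0]; simp

/-- Key consequence of sharpness: for every nonzero integral `A`, the divisorial closure
`A_v` is star-invertible. -/
theorem vinv (hsharp : s.IsSharp) (A : FractionalIdeal D⁰ K) (hA0 : A ≠ 0) (hA1 : A ≤ 1) :
    s.star (vOp A * A⁻¹) = 1 := by
  obtain ⟨A₀, hA₀⟩ := le_one_iff_exists_coeIdeal.mp hA1
  subst hA₀
  obtain ⟨x, hx, hx0⟩ := exists_ne_zero_mem hA0
  obtain ⟨a, ha, rfl⟩ := (mem_coeIdeal _).mp hx
  set xa : K := algebraMap D K a with hxa_def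
  have hxa : xa ≠ 0 := hx0
  have ha0 : a ≠ 0 := by
    intro h; apply hx0; rw [hxa_def, h, _root_.map_zero]
  set A : FractionalIdeal D⁰ K := (A₀ : FractionalIdeal D⁰ K) with hA_def
  have hspan_le : spanSingleton D⁰ xa ≤ A :=
    spanSingleton_le_iff_mem.mpr ((mem_coeIdeal _).mpr ⟨a, ha, rfl⟩)
  set B : FractionalIdeal D⁰ K := spanSingleton D⁰ xa * A⁻¹ with hB_def
  have hB0 : B ≠ 0 := mul_ne_zero' (spanSingleton_ne_zero_iff.mpr hxa) (inv_ne_zero' hA0)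
  have hB1 : B ≤ 1 := le_trans (mul_le_mul'' hspan_le (le_refl _)) mul_inv_le_one'
  obtain ⟨B₀, hB₀⟩ := le_one_iff_exists_coeIdeal.mp hB1
  set I₀ : Ideal D := Ideal.span {a} with hI₀_def
  have hI₀ne : I₀ ≠ 0 := by
    intro h
    apply ha0
    apply Ideal.span_singleton_eq_bot.mp
    rwa [← Submodule.zero_eq_bot]
  have hA₀ne : A₀ ≠ 0 := coeIdeal_ne_zero_of_ne hA0
  have hB₀ne : B₀ ≠ 0 := coeIdeal_ne_zero_of_ne (K := K) (by rw [hB₀]; exact hB0)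
  have hprod : A₀ * B₀ ≤ I₀ := by
    rw [← coeIdeal_le_coeIdeal K, coeIdeal_mul, hB₀, hI₀_def, coeIdeal_span_singleton]
    calc A * B = spanSingleton D⁰ xa * (A * A⁻¹) := by rw [hB_def]; ring
      _ ≤ spanSingleton D⁰ xa * 1 := mul_le_mul'' (le_refl _) mul_inv_le_one'
      _ = spanSingleton D⁰ xa := mul_one _
  obtain ⟨H, J, hH0, hJ0, hIJ, hAH, hBJ⟩ := hsharp I₀ A₀ B₀ hI₀ne hA₀ne hB₀ne hprod
  rw [hB₀] at hBJ
  set FH : FractionalIdeal D⁰ K := (H : FractionalIdeal D⁰ K) with hFH_def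
  set FJ : FractionalIdeal D⁰ K := (J : FractionalIdeal D⁰ K) with hFJ_def
  have hFH0 : FH ≠ 0 := by
    rw [hFH_def, Ne, coeIdeal_eq_zero]
    intro h; exact hH0 (by rwa [Submodule.zero_eq_bot])
  have hFJ0 : FJ ≠ 0 := by
    rw [hFJ_def, Ne, coeIdeal_eq_zero]
    intro h; exact hJ0 (by rwa [Submodule.zero_eq_bot])
  have hstarI : s.star (I₀ : FractionalIdeal D⁰ K) = spanSingleton D⁰ xa := by
    rw [hI₀_def, coeIdeal_span_singleton]
    exact star_spanSingleton s hxa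
  have hIJ' : s.star (FH * FJ) = spanSingleton D⁰ xa := by
    rw [← hIJ]; exact hstarI
  have h1 : A * FJ ≤ spanSingleton D⁰ xa := by
    calc A * FJ ≤ s.star FH * FJ := mul_le_mul'' hAH (le_refl _)
      _ ≤ s.star (FH * FJ) := star_mul_le s hFH0 hFJ0
      _ = spanSingleton D⁰ xa := hIJ'
  have hJB : FJ ≤ B := by
    rw [hB_def, le_spanSingleton_mul_iff hxa]
    show _ ≤ 1 / A
    rw [le_div_iff_mul_le hA0]
    calc spanSingleton D⁰ xa⁻¹ * FJ * A = spanSingleton D⁰ xa⁻¹ * (A * FJ) := by ring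
      _ ≤ spanSingleton D⁰ xa⁻¹ * spanSingleton D⁰ xa := mul_le_mul'' (le_refl _) h1
      _ = 1 := by rw [spanSingleton_mul_spanSingleton, inv_mul_cancel₀ hxa, spanSingleton_one]
  have hHB : s.star (FH * B) = spanSingleton D⁰ xa := by
    apply le_antisymm
    · calc s.star (FH * B) ≤ s.star (FH * s.star FJ) :=
            s.star_mono _ _ (mul_ne_zero' hFH0 hB0)
              (mul_ne_zero' hFH0 (star_ne_zero s hFJ0)) (mul_le_mul'' (le_refl _) hBJ)
        _ = s.star (FH * FJ) := star_mul_star_right s hFH0 hFJ0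
        _ = spanSingleton D⁰ xa := hIJ'
    · calc spanSingleton D⁰ xa = s.star (FH * FJ) := hIJ'.symm
        _ ≤ s.star (FH * B) := s.star_mono _ _ (mul_ne_zero' hFH0 hFJ0)
            (mul_ne_zero' hFH0 hB0) (mul_le_mul'' (le_refl _) hJB)
  have hkey : s.star (FH * A⁻¹) = 1 := by
    apply spanSingleton_mul_cancel hxa
    have hre : FH * B = spanSingleton D⁰ xa * (FH * A⁻¹) := by rw [hB_def]; ring
    rw [mul_one]
    calc spanSingleton D⁰ xa * s.star (FH * A⁻¹)
        = s.star (spanSingleton D⁰ xa * (FH * A⁻¹)) :=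
          (s.star_smul xa hxa _ (mul_ne_zero' hFH0 (inv_ne_zero' hA0))).symm
      _ = s.star (FH * B) := by rw [← hre]
      _ = spanSingleton D⁰ xa := hHB
  have hHinv : s.star (FH * FH⁻¹) = 1 := sinv_of_witness s hFH0 (inv_ne_zero' hA0) hkey
  have hAinvH : A⁻¹ ≤ FH⁻¹ := by
    show _ ≤ 1 / FH
    rw [le_div_iff_mul_le hFH0, mul_comm]
    calc FH * A⁻¹ ≤ s.star (FH * A⁻¹) := s.le_star _ (mul_ne_zero' hFH0 (inv_ne_zero' hA0))
      _ = 1 := hkey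
  have hHinvA : FH⁻¹ ≤ A⁻¹ := by
    show _ ≤ 1 / A
    rw [le_div_iff_mul_le hA0]
    calc FH⁻¹ * A ≤ FH⁻¹ * s.star FH := mul_le_mul'' (le_refl _) hAH
      _ ≤ s.star (FH⁻¹ * FH) := mul_star_le s (inv_ne_zero' hFH0) hFH0
      _ ≤ 1 := star_le_one s (mul_ne_zero' (inv_ne_zero' hFH0) hFH0) inv_mul_le_one'
  have hinv_eq : A⁻¹ = FH⁻¹ := le_antisymm hAinvH hHinvA
  have hvOpA : vOp A = s.star FH := by
    show (A⁻¹)⁻¹ = s.star FH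
    rw [hinv_eq]
    exact (star_eq_vOp_of_sinv s hFH0 hHinv).symm
  rw [hvOpA, hinv_eq, star_mul_star_left s hFH0 (inv_ne_zero' hFH0)]
  exact hHinv

/-- star-invertibility of `vOp A` in canonical form -/
lemma vOp_sinv (hsharp : s.IsSharp) (A : FractionalIdeal D⁰ K) (hA0 : A ≠ 0) (hA1 : A ≤ 1) :
    s.star (vOp A * (vOp A)⁻¹) = 1 := by
  rw [inv_vOp]
  exact vinv s hsharp A hA0 hA1

end Statement5Aux
end Aux3

section Aux4

open FractionalIdeal

variable {D K : Type*} [CommRing D] [IsDomain D] [Field K] [Algebra D K] [IsFractionRing D K]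

namespace Statement5Aux

lemma mem_inf_iff' {I J : FractionalIdeal D⁰ K} {x : K} : x ∈ I ⊓ J ↔ x ∈ I ∧ x ∈ J := by
  rw [← mem_coe, coe_inf]
  constructor
  · intro h; exact ⟨mem_coe.mp h.1, mem_coe.mp h.2⟩
  · intro h; exact ⟨mem_coe.mpr h.1, mem_coe.mpr h.2⟩

lemma mem_sup_iff' {I J : FractionalIdeal D⁰ K} {x : K} :
    x ∈ I ⊔ J ↔ ∃ y ∈ I, ∃ z ∈ J, y + z = x := by
  rw [← mem_coe, coe_sup]
  rw [Submodule.mem_sup]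
  constructor
  · rintro ⟨y, hy, z, hz, rfl⟩; exact ⟨y, mem_coe.mp hy, z, mem_coe.mp hz, rfl⟩
  · rintro ⟨y, hy, z, hz, rfl⟩; exact ⟨y, mem_coe.mpr hy, z, mem_coe.mpr hz, rfl⟩

lemma add_mem' {I : FractionalIdeal D⁰ K} {x y : K} (hx : x ∈ I) (hy : y ∈ I) : x + y ∈ I := by
  rw [← mem_coe] at hx hy ⊢
  exact Submodule.add_mem _ hx hy

lemma sub_mem' {I : FractionalIdeal D⁰ K} {x y : K} (hx : x ∈ I) (hy : y ∈ I) : x - y ∈ I := by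
  rw [← mem_coe] at hx hy ⊢
  exact Submodule.sub_mem _ hx hy

/-- splitting off the integral part of a sup -/
lemma sup_inf_one_le {A Z : FractionalIdeal D⁰ K} (hA : A ≤ 1) :
    (A ⊔ Z) ⊓ 1 ≤ A ⊔ (Z ⊓ 1) := by
  intro v hv
  obtain ⟨hv1, hv2⟩ := mem_inf_iff'.mp hv
  obtain ⟨y, hy, z, hz, rfl⟩ := mem_sup_iff'.mp hv1
  have hz1 : z ∈ (1 : FractionalIdeal D⁰ K) := by
    have : y + z - y ∈ (1 : FractionalIdeal D⁰ K) := sub_mem' hv2 (hA hy)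
    simpa using this
  exact mem_sup_iff'.mpr ⟨y, hy, z, mem_inf_iff'.mpr ⟨hz, hz1⟩, rfl⟩

lemma sq_sup_expand (X₁ X₂ : FractionalIdeal D⁰ K) :
    (X₁ ⊔ X₂) * (X₁ ⊔ X₂) = X₁ * X₁ ⊔ (X₁ * X₂ ⊔ X₂ * X₂) := by
  rw [sup_mul_distrib, mul_sup_distrib, mul_sup_distrib, mul_comm X₂ X₁]
  rw [sup_assoc, ← sup_assoc (X₁ * X₂), sup_idem]

variable (s : StarOperation D K)

/-- The core lemma: two star-invertible, divisorial, "v-coprime" integral ideals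
are star-comaximal (in a star-sharp domain with stable star operation). -/
theorem pairXX_aux (hsharp : s.IsSharp) (hst : s.IsStable)
    {X₁ X₂ : FractionalIdeal D⁰ K} (h1 : X₁ ≠ 0) (h2 : X₂ ≠ 0)
    (hle1 : X₁ ≤ 1) (hle2 : X₂ ≤ 1)
    (hi1 : s.star (X₁ * X₁⁻¹) = 1) (hi2 : s.star (X₂ * X₂⁻¹) = 1)
    (hd2 : vOp X₂ = X₂)
    (hcop : X₁⁻¹ ⊓ X₂⁻¹ = 1) : s.star (X₁ ⊔ X₂) = 1 := by
  set V : FractionalIdeal D⁰ K := X₁ ⊔ X₂ with hV_def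
  have hV0 : V ≠ 0 := sup_ne_zero_left h1
  have hV1 : V ≤ 1 := sup_le hle1 hle2
  -- (α)
  have halpha : X₂ * X₁⁻¹ ⊓ 1 ≤ X₂ := by
    intro w hw
    obtain ⟨hw1, hw2⟩ := mem_inf_iff'.mp hw
    by_cases hw0 : w = 0
    · subst hw0; exact FractionalIdeal.zero_mem X₂
    have e1 : spanSingleton D⁰ w * X₂⁻¹ ≤ X₁⁻¹ := by
      calc spanSingleton D⁰ w * X₂⁻¹ ≤ (X₂ * X₁⁻¹) * X₂⁻¹ :=
            mul_le_mul'' (spanSingleton_le_iff_mem.mpr hw1) (le_refl _)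
        _ = (X₂ * X₂⁻¹) * X₁⁻¹ := by ring
        _ ≤ 1 * X₁⁻¹ := mul_le_mul'' mul_inv_le_one' (le_refl _)
        _ = X₁⁻¹ := one_mul _
    have e2 : spanSingleton D⁰ w * X₂⁻¹ ≤ X₂⁻¹ := by
      calc spanSingleton D⁰ w * X₂⁻¹ ≤ 1 * X₂⁻¹ :=
            mul_le_mul'' (spanSingleton_le_iff_mem.mpr hw2) (le_refl _)
        _ = X₂⁻¹ := one_mul _
    have e3 : spanSingleton D⁰ w * X₂⁻¹ ≤ 1 := by rw [← hcop]; exact le_inf e1 e2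
    have e4 : spanSingleton D⁰ w ≤ vOp X₂ := by
      show _ ≤ (X₂⁻¹)⁻¹
      rw [inv_eq (I := X₂⁻¹), le_div_iff_mul_le (inv_ne_zero' h2)]
      exact e3
    rw [hd2] at e4
    exact spanSingleton_le_iff_mem.mp e4
  -- ideal representatives
  obtain ⟨x₁, hx₁⟩ := le_one_iff_exists_coeIdeal.mp hle1
  obtain ⟨x₂, hx₂⟩ := le_one_iff_exists_coeIdeal.mp hle2
  set I₁ : Ideal D := x₁ * x₁ ⊔ x₂ with hI₁_def
  set F1 : FractionalIdeal D⁰ K := X₁ * X₁ ⊔ X₂ with hF1_def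
  have hI₁coe : (I₁ : FractionalIdeal D⁰ K) = F1 := by
    rw [hI₁_def, coeIdeal_sup, ← sup_eq_add, coeIdeal_mul, hx₁, hx₂]
  have hF10 : F1 ≠ 0 := sup_ne_zero_right h2
  have hI₁ne : I₁ ≠ 0 := coeIdeal_ne_zero_of_ne (K := K) (by rw [hI₁coe]; exact hF10)
  have hx₁ne : x₁ ≠ 0 := coeIdeal_ne_zero_of_ne (K := K) (by rw [hx₁]; exact h1)
  obtain ⟨H, J, hH0, hJ0, hIJ, hXH, hXJ⟩ :=
    hsharp I₁ x₁ x₁ hI₁ne hx₁ne hx₁ne le_sup_left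
  rw [hx₁] at hXH hXJ
  set FH : FractionalIdeal D⁰ K := (H : FractionalIdeal D⁰ K) with hFH_def
  set FJ : FractionalIdeal D⁰ K := (J : FractionalIdeal D⁰ K) with hFJ_def
  have hFH0 : FH ≠ 0 := by
    rw [hFH_def, Ne, coeIdeal_eq_zero]; intro h; exact hH0 (by rwa [Submodule.zero_eq_bot])
  have hFJ0 : FJ ≠ 0 := by
    rw [hFJ_def, Ne, coeIdeal_eq_zero]; intro h; exact hJ0 (by rwa [Submodule.zero_eq_bot])
  have hIJ' : s.star F1 = s.star (FH * FJ) := by rw [← hI₁coe]; exact hIJ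
  -- the bound: any ideal that multiplies X₁ into (F1)* is inside (V)*
  have hbound : ∀ W : FractionalIdeal D⁰ K, W ≠ 0 → W ≤ 1 →
      X₁ * W ≤ s.star F1 → W ≤ s.star V := by
    intro W hW0 hW1 hmul
    intro z hz
    by_cases hz0 : z = 0
    · subst hz0; exact FractionalIdeal.zero_mem _
    have hz1 : z ∈ (1 : FractionalIdeal D⁰ K) := hW1 hz
    have step1 : spanSingleton D⁰ z * X₁ ≤ s.star F1 := by
      calc spanSingleton D⁰ z * X₁ ≤ W * X₁ :=
            mul_le_mul'' (spanSingleton_le_iff_mem.mpr hz) (le_refl _)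
        _ = X₁ * W := mul_comm _ _
        _ ≤ s.star F1 := hmul
    have hT0 : s.star F1 * X₁⁻¹ ≠ 0 :=
      mul_ne_zero' (star_ne_zero s hF10) (inv_ne_zero' h1)
    have step2 : z ∈ s.star (s.star F1 * X₁⁻¹) := by
      apply mem_star_of_smul_le s (mul_ne_zero' h1 (inv_ne_zero' h1)) hT0 hi1
      calc spanSingleton D⁰ z * (X₁ * X₁⁻¹) = (spanSingleton D⁰ z * X₁) * X₁⁻¹ := by ring
        _ ≤ s.star F1 * X₁⁻¹ := mul_le_mul'' step1 (le_refl _)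
    rw [star_mul_star_left s hF10 (inv_ne_zero' h1)] at step2
    have bound1 : F1 * X₁⁻¹ ≤ X₁ ⊔ X₂ * X₁⁻¹ := by
      rw [hF1_def, sup_mul_distrib]
      apply sup_le_sup _ (le_refl _)
      calc X₁ * X₁ * X₁⁻¹ = X₁ * (X₁ * X₁⁻¹) := by ring
        _ ≤ X₁ * 1 := mul_le_mul'' (le_refl _) mul_inv_le_one'
        _ = X₁ := mul_one _
    have hsupne : X₁ ⊔ X₂ * X₁⁻¹ ≠ 0 := sup_ne_zero_left h1
    have step3 : z ∈ s.star (X₁ ⊔ X₂ * X₁⁻¹) :=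
      s.star_mono _ _ (mul_ne_zero' hF10 (inv_ne_zero' h1)) hsupne bound1 step2
    have step4 : z ∈ s.star ((X₁ ⊔ X₂ * X₁⁻¹) ⊓ 1) := by
      rw [hst _ _ hsupne (one_ne_zero' (FractionalIdeal D⁰ K)), s.star_one]
      exact mem_inf_iff'.mpr ⟨step3, hz1⟩
    have hinfne : (X₁ ⊔ X₂ * X₁⁻¹) ⊓ 1 ≠ 0 := inf_ne_zero h1 le_sup_left hle1
    have bound2 : (X₁ ⊔ X₂ * X₁⁻¹) ⊓ 1 ≤ V := by
      calc (X₁ ⊔ X₂ * X₁⁻¹) ⊓ 1 ≤ X₁ ⊔ (X₂ * X₁⁻¹ ⊓ 1) := sup_inf_one_le hle1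
        _ ≤ X₁ ⊔ X₂ := sup_le_sup (le_refl _) halpha
    exact s.star_mono _ _ hinfne hV0 bound2 step4
  -- apply the bound to H and J
  have hHV : FH ≤ s.star V := by
    apply hbound FH hFH0 coeIdeal_le_one
    calc X₁ * FH ≤ s.star FJ * FH := mul_le_mul'' hXJ (le_refl _)
      _ ≤ s.star (FJ * FH) := star_mul_le s hFJ0 hFH0
      _ = s.star (FH * FJ) := by rw [mul_comm]
      _ = s.star F1 := hIJ'.symm
  have hJV : FJ ≤ s.star V := by
    apply hbound FJ hFJ0 coeIdeal_le_one
    calc X₁ * FJ ≤ s.star FH * FJ := mul_le_mul'' hXH (le_refl _)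
      _ ≤ s.star (FH * FJ) := star_mul_le s hFH0 hFJ0
      _ = s.star F1 := hIJ'.symm
  have hQ : s.star F1 ≤ s.star (V * V) := by
    calc s.star F1 = s.star (FH * FJ) := hIJ'
      _ ≤ s.star (s.star V * s.star V) :=
          s.star_mono _ _ (mul_ne_zero' hFH0 hFJ0)
            (mul_ne_zero' (star_ne_zero s hV0) (star_ne_zero s hV0))
            (mul_le_mul'' hHV hJV)
      _ = s.star (V * s.star V) := star_mul_star_left s hV0 (star_ne_zero s hV0)
      _ = s.star (V * V) := star_mul_star_right s hV0 hV0
  -- step (iii) : X₂ ≤ (X₂ V)*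
  have hs2 : s.star X₂ = X₂ := by rw [star_eq_vOp_of_sinv s h2 hi2, hd2]
  have hX2VV : X₂ ≤ s.star (V * V) := by
    calc X₂ ≤ F1 := le_sup_right
      _ ≤ s.star F1 := s.le_star _ hF10
      _ ≤ s.star (V * V) := hQ
  have hX2inf : X₂ ≤ s.star ((V * V) ⊓ X₂) := by
    rw [hst _ _ (mul_ne_zero' hV0 hV0) h2, hs2]
    intro z hz
    exact mem_inf_iff'.mpr ⟨hX2VV hz, hz⟩
  have keysub : X₁ * X₁ ⊓ X₂ ≤ s.star (X₂ * X₁) := by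
    intro z hz
    obtain ⟨hza, hzb⟩ := mem_inf_iff'.mp hz
    by_cases hz0 : z = 0
    · subst hz0; exact FractionalIdeal.zero_mem _
    have e1 : spanSingleton D⁰ z * X₁⁻¹ ≤ X₁ := by
      calc spanSingleton D⁰ z * X₁⁻¹ ≤ (X₁ * X₁) * X₁⁻¹ :=
            mul_le_mul'' (spanSingleton_le_iff_mem.mpr hza) (le_refl _)
        _ = X₁ * (X₁ * X₁⁻¹) := by ring
        _ ≤ X₁ * 1 := mul_le_mul'' (le_refl _) mul_inv_le_one'
        _ = X₁ := mul_one _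
    have e2 : spanSingleton D⁰ z * X₁⁻¹ ≤ X₂ * X₁⁻¹ :=
      mul_le_mul'' (spanSingleton_le_iff_mem.mpr hzb) (le_refl _)
    have e3 : spanSingleton D⁰ z * X₁⁻¹ ≤ X₂ :=
      le_trans (le_inf e2 (le_trans e1 hle1)) halpha
    apply mem_star_of_smul_le s (mul_ne_zero' h1 (inv_ne_zero' h1))
      (mul_ne_zero' h2 h1) hi1
    calc spanSingleton D⁰ z * (X₁ * X₁⁻¹) = (spanSingleton D⁰ z * X₁⁻¹) * X₁ := by ring
      _ ≤ X₂ * X₁ := mul_le_mul'' e3 (le_refl _)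
  have hsplit2 : (V * V) ⊓ X₂ ≤ s.star (X₂ * V) := by
    have hX2V : X₂ * V = X₂ * X₁ ⊔ X₂ * X₂ := mul_sup_distrib X₂ X₁ X₂
    have hsub : X₂ * X₁ ≤ s.star (X₂ * V) := by
      refine le_trans ?_ (s.le_star _ (mul_ne_zero' h2 hV0))
      rw [hX2V]; exact le_sup_left
    have hsub2 : X₂ * X₂ ≤ s.star (X₂ * V) := by
      refine le_trans ?_ (s.le_star _ (mul_ne_zero' h2 hV0))
      rw [hX2V]; exact le_sup_right
    have hkeysub' : X₁ * X₁ ⊓ X₂ ≤ s.star (X₂ * V) := by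
      refine le_trans keysub (s.star_mono _ _ (mul_ne_zero' h2 h1) (mul_ne_zero' h2 hV0) ?_)
      rw [hX2V]; exact le_sup_left
    intro w hw
    obtain ⟨hwv, hwx⟩ := mem_inf_iff'.mp hw
    rw [hV_def, sq_sup_expand] at hwv
    obtain ⟨p, hp, q, hq, hpq⟩ := mem_sup_iff'.mp hwv
    have hqX2 : q ∈ X₂ := by
      have : X₁ * X₂ ⊔ X₂ * X₂ ≤ X₂ := by
        apply sup_le
        · calc X₁ * X₂ ≤ 1 * X₂ := mul_le_mul'' hle1 (le_refl _)
            _ = X₂ := one_mul _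
        · calc X₂ * X₂ ≤ 1 * X₂ := mul_le_mul'' hle2 (le_refl _)
            _ = X₂ := one_mul _
      exact this hq
    have hpX2 : p ∈ X₂ := by
      have : p = w - q := by rw [← hpq]; ring
      rw [this]
      exact sub_mem' hwx hqX2
    have hpmem : p ∈ s.star (X₂ * V) := hkeysub' (mem_inf_iff'.mpr ⟨hp, hpX2⟩)
    have hsupXV : X₁ * X₂ ⊔ X₂ * X₂ ≤ s.star (X₂ * V) :=
      sup_le (by rw [mul_comm]; exact hsub) hsub2
    have hqmem : q ∈ s.star (X₂ * V) := hsupXV hq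
    rw [← hpq]
    exact add_mem' hpmem hqmem
  have hX2final : X₂ ≤ s.star (X₂ * V) := by
    have hinfne : (V * V) ⊓ X₂ ≠ 0 := by
      apply inf_ne_zero (mul_ne_zero' h2 h2)
      · exact mul_le_mul'' le_sup_right le_sup_right
      · calc X₂ * X₂ ≤ X₂ * 1 := mul_le_mul'' (le_refl _) hle2
          _ = X₂ := mul_one _
    calc X₂ ≤ s.star ((V * V) ⊓ X₂) := hX2inf
      _ ≤ s.star (s.star (X₂ * V)) :=
          s.star_mono _ _ hinfne (star_ne_zero s (mul_ne_zero' h2 hV0)) hsplit2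
      _ = s.star (X₂ * V) := s.star_star _ (mul_ne_zero' h2 hV0)
  -- final cancellation
  have final : (1 : FractionalIdeal D⁰ K) ≤ s.star V := by
    calc (1 : FractionalIdeal D⁰ K) = s.star (X₂ * X₂⁻¹) := hi2.symm
      _ ≤ s.star (s.star (X₂ * V) * X₂⁻¹) :=
          s.star_mono _ _ (mul_ne_zero' h2 (inv_ne_zero' h2))
            (mul_ne_zero' (star_ne_zero s (mul_ne_zero' h2 hV0)) (inv_ne_zero' h2))
            (mul_le_mul'' hX2final (le_refl _))
      _ = s.star ((X₂ * V) * X₂⁻¹) := star_mul_star_left s (mul_ne_zero' h2 hV0) (inv_ne_zero' h2)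
      _ = s.star (V * (X₂ * X₂⁻¹)) := by rw [show (X₂ * V) * X₂⁻¹ = V * (X₂ * X₂⁻¹) by ring]
      _ = s.star (V * s.star (X₂ * X₂⁻¹)) :=
          (star_mul_star_right s hV0 (mul_ne_zero' h2 (inv_ne_zero' h2))).symm
      _ = s.star (V * 1) := by rw [hi2]
      _ = s.star V := by rw [mul_one]
  exact le_antisymm (star_le_one s hV0 hV1) final

/-- wrapper: divisoriality hypotheses removed. -/
theorem pairXX (hsharp : s.IsSharp) (hst : s.IsStable)
    {X₁ X₂ : FractionalIdeal D⁰ K} (h1 : X₁ ≠ 0) (h2 : X₂ ≠ 0)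
    (hle1 : X₁ ≤ 1) (hle2 : X₂ ≤ 1)
    (hi1 : s.star (X₁ * X₁⁻¹) = 1) (hi2 : s.star (X₂ * X₂⁻¹) = 1)
    (hcop : X₁⁻¹ ⊓ X₂⁻¹ = 1) : s.star (X₁ ⊔ X₂) = 1 := by
  have hv1 := sinv_vOp_aux s h1 hi1
  have hv2 := sinv_vOp_aux s h2 hi2
  have hstar1 : s.star X₁ = vOp X₁ := star_eq_vOp_of_sinv s h1 hi1
  have hstar2 : s.star X₂ = vOp X₂ := star_eq_vOp_of_sinv s h2 hi2
  have key : s.star (vOp X₁ ⊔ vOp X₂) = 1 := by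
    apply pairXX_aux s hsharp hst (vOp_ne_zero h1) (vOp_ne_zero h2)
      (vOp_le_one hle1) (vOp_le_one hle2) hv1 hv2 (vOp_vOp X₂)
    rw [inv_vOp, inv_vOp]
    exact hcop
  calc s.star (X₁ ⊔ X₂) = s.star (s.star X₁ ⊔ X₂) := (star_sup_star_left s h1 h2).symm
    _ = s.star (vOp X₁ ⊔ X₂) := by rw [hstar1]
    _ = s.star (vOp X₁ ⊔ s.star X₂) := by
        rw [star_sup_star_right s (vOp_ne_zero h1) h2]
    _ = s.star (vOp X₁ ⊔ vOp X₂) := by rw [hstar2]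
    _ = 1 := key

end Statement5Aux
end Aux4

section Aux5

open FractionalIdeal

variable {D K : Type*} [CommRing D] [IsDomain D] [Field K] [Algebra D K] [IsFractionRing D K]

namespace Statement5Aux

lemma ext_coe {I J : FractionalIdeal D⁰ K}
    (h : (I : Submodule D K) = (J : Submodule D K)) : I = J :=
  coeToSubmodule_injective h

variable (s : StarOperation D K)

/-- M4: every nonzero finitely generated integral fractional ideal has `F* = F_v`. -/
theorem fg_star_eq_vOp (hsharp : s.IsSharp) (hst : s.IsStable) :
    ∀ (S : Finset K) (F : FractionalIdeal D⁰ K), F ≠ 0 → F ≤ 1 →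
      (F : Submodule D K) = Submodule.span D (S : Set K) → s.star F = vOp F := by
  classical
  intro S
  induction S using Finset.induction_on with
  | empty =>
    intro F hF0 _ hspan
    exfalso
    apply hF0
    apply ext_coe
    rw [hspan]
    simp
  | @insert g S hgS ih =>
    intro F hF0 hF1 hspan
    have hsp : (F : Submodule D K) = Submodule.span D {g} ⊔ Submodule.span D (S : Set K) := by
      rw [hspan, Finset.coe_insert, Submodule.span_insert]
    have hsub : Submodule.span D (S : Set K) ≤ (F : Submodule D K) := by
      rw [hsp]; exact le_sup_right
    haveI := Classical.decEq K
    set F'' : FractionalIdeal D⁰ K :=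
      ⟨Submodule.span D (S : Set K), isFractional_of_le (J := F) hsub⟩ with hF''_def
    have hF''coe : (F'' : Submodule D K) = Submodule.span D (S : Set K) := rfl
    have hFeq : F = spanSingleton D⁰ g ⊔ F'' := by
      apply ext_coe
      rw [coe_sup, coe_spanSingleton, hF''coe, hsp]
    have hF''leF : F'' ≤ F := by
      rw [← coe_le_coe, hF''coe]; exact hsub
    by_cases hF''0 : F'' = 0
    · -- F is a nonzero principal ideal
      have hFg : F = spanSingleton D⁰ g := by
        rw [hFeq, hF''0]
        exact sup_eq_left.mpr (zero_le _)
      have hg0 : g ≠ 0 := by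
        intro h; apply hF0; rw [hFg, h, spanSingleton_zero]
      rw [hFg, star_spanSingleton s hg0, vOp_spanSingleton hg0]
    · by_cases hg0 : g = 0
      · have hFF'' : F = F'' := by
          rw [hFeq, hg0, spanSingleton_zero]
          exact sup_eq_right.mpr (zero_le _)
        rw [hFF'']
        exact ih F'' hF''0 (le_trans hF''leF hF1) rfl
      · -- main case
        have hgne : spanSingleton D⁰ g ≠ (0 : FractionalIdeal D⁰ K) :=
          spanSingleton_ne_zero_iff.mpr hg0
        have hF''1 : F'' ≤ 1 := le_trans hF''leF hF1
        have hIH : s.star F'' = vOp F'' := ih F'' hF''0 hF''1 rfl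
        set X₂ : FractionalIdeal D⁰ K := vOp F'' with hX2_def
        have hX20 : X₂ ≠ 0 := vOp_ne_zero hF''0
        have hX21 : X₂ ≤ 1 := vOp_le_one hF''1
        have hX2inv : s.star (X₂ * X₂⁻¹) = 1 := vOp_sinv s hsharp F'' hF''0 hF''1
        set Y : FractionalIdeal D⁰ K := vOp F with hY_def
        have hY0 : Y ≠ 0 := vOp_ne_zero hF0
        have hY1 : Y ≤ 1 := vOp_le_one hF1
        have hYinv : s.star (Y * Y⁻¹) = 1 := vOp_sinv s hsharp F hF0 hF1
        have hgF : g ∈ F := by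
          have hle : spanSingleton D⁰ g ≤ F := by rw [hFeq]; exact le_sup_left
          exact spanSingleton_le_iff_mem.mp hle
        have hgY : g ∈ Y := (le_vOp' F) hgF
        set E : FractionalIdeal D⁰ K := spanSingleton D⁰ g ⊔ X₂ with hE_def
        have hE0 : E ≠ 0 := sup_ne_zero_right hX20
        have hEY : E ≤ Y := by
          apply sup_le (spanSingleton_le_iff_mem.mpr hgY)
          rw [hX2_def, hY_def]
          exact vOp_mono hF''leF
        have hEinv_eq : E⁻¹ = F⁻¹ := by
          rw [hE_def, sup_inv hgne hX20, hX2_def, inv_vOp,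
            ← sup_inv hgne hF''0, ← hFeq]
        have hvOpE : vOp E = Y := by
          show (E⁻¹)⁻¹ = Y
          rw [hEinv_eq]
          rfl
        set X₁' : FractionalIdeal D⁰ K := spanSingleton D⁰ g * Y⁻¹ with hX1'_def
        set X₂' : FractionalIdeal D⁰ K := X₂ * Y⁻¹ with hX2'_def
        have hYinvne : Y⁻¹ ≠ 0 := inv_ne_zero' hY0
        have hX1'0 : X₁' ≠ 0 := mul_ne_zero' hgne hYinvne
        have hX2'0 : X₂' ≠ 0 := mul_ne_zero' hX20 hYinvne
        have hX1'1 : X₁' ≤ 1 :=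
          le_trans (mul_le_mul'' (spanSingleton_le_iff_mem.mpr hgY) (le_refl _)) mul_inv_le_one'
        have hX2'1 : X₂' ≤ 1 := by
          have hX2Y : X₂ ≤ Y := le_trans le_sup_right hEY
          exact le_trans (mul_le_mul'' hX2Y (le_refl _)) mul_inv_le_one'
        have hX1'inv : s.star (X₁' * X₁'⁻¹) = 1 := by
          apply sinv_of_witness s hX1'0
            (W := spanSingleton D⁰ g⁻¹ * Y)
            (mul_ne_zero' (spanSingleton_ne_zero_iff.mpr (inv_ne_zero hg0)) hY0)
          have hprod : X₁' * (spanSingleton D⁰ g⁻¹ * Y) = Y * Y⁻¹ := by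
            rw [hX1'_def,
              show spanSingleton D⁰ g * Y⁻¹ * (spanSingleton D⁰ g⁻¹ * Y) =
                (spanSingleton D⁰ g * spanSingleton D⁰ g⁻¹) * (Y * Y⁻¹) by ring,
              spanSingleton_mul_spanSingleton_inv hg0, one_mul]
          rw [hprod]
          exact hYinv
        have hX2'inv : s.star (X₂' * X₂'⁻¹) = 1 := by
          apply sinv_of_witness s hX2'0 (W := X₂⁻¹ * Y)
            (mul_ne_zero' (inv_ne_zero' hX20) hY0)
          have hprod : X₂' * (X₂⁻¹ * Y) = (X₂ * X₂⁻¹) * (Y * Y⁻¹) := by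
            rw [hX2'_def]; ring
          rw [hprod]
          calc s.star ((X₂ * X₂⁻¹) * (Y * Y⁻¹))
              = s.star (s.star (X₂ * X₂⁻¹) * (Y * Y⁻¹)) :=
                (star_mul_star_left s (mul_ne_zero' hX20 (inv_ne_zero' hX20))
                  (mul_ne_zero' hY0 hYinvne)).symm
            _ = s.star (1 * (Y * Y⁻¹)) := by rw [hX2inv]
            _ = s.star (Y * Y⁻¹) := by rw [one_mul]
            _ = 1 := hYinv
        have hsupEY : X₁' ⊔ X₂' = E * Y⁻¹ := by
          rw [hX1'_def, hX2'_def, hE_def, sup_mul_distrib]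
        have hEYne : E * Y⁻¹ ≠ 0 := mul_ne_zero' hE0 hYinvne
        have hEYle1 : E * Y⁻¹ ≤ 1 := le_trans (mul_le_mul'' hEY (le_refl _)) mul_inv_le_one'
        have hEYinv : (E * Y⁻¹)⁻¹ = 1 := by
          apply le_antisymm
          · intro z hz
            by_cases hz0 : z = 0
            · subst hz0; exact FractionalIdeal.zero_mem _
            have hle := spanSingleton_le_iff_mem.mpr hz
            rw [inv_eq] at hle
            have hz1 : spanSingleton D⁰ z * (E * Y⁻¹) ≤ 1 :=
              (le_div_iff_mul_le hEYne).mp hle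
            have h2 : spanSingleton D⁰ z * E ≤ Y := by
              have h2' : spanSingleton D⁰ z * E ≤ (Y⁻¹)⁻¹ := by
                rw [inv_eq (I := Y⁻¹), le_div_iff_mul_le hYinvne, mul_assoc]
                exact hz1
              have : (Y⁻¹)⁻¹ = Y := by
                show vOp Y = Y
                rw [hY_def]
                exact vOp_vOp F
              rwa [this] at h2'
            have h3 : spanSingleton D⁰ z * Y ≤ Y := by
              have heq : spanSingleton D⁰ z * Y = vOp (spanSingleton D⁰ z * E) := by
                rw [vOp_spanSingleton_mul hz0 E hE0, hvOpE]
              rw [heq]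
              have hm := vOp_mono h2
              have hYY : vOp Y = Y := by rw [hY_def]; exact vOp_vOp F
              rwa [hYY] at hm
            have h4 : spanSingleton D⁰ z * (Y * Y⁻¹) ≤ Y * Y⁻¹ := by
              rw [← mul_assoc]
              exact mul_le_mul'' h3 (le_refl _)
            have h5 : z ∈ s.star (Y * Y⁻¹) :=
              mem_star_of_smul_le s (mul_ne_zero' hY0 hYinvne)
                (mul_ne_zero' hY0 hYinvne) hYinv h4
            rwa [hYinv] at h5
          · have h6 := inv_anti_mono hEYne (one_ne_zero' (FractionalIdeal D⁰ K)) hEYle1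
            rwa [inv_one'] at h6
        have hcop : X₁'⁻¹ ⊓ X₂'⁻¹ = 1 := by
          rw [← sup_inv hX1'0 hX2'0, hsupEY, hEYinv]
        have hpair : s.star (X₁' ⊔ X₂') = 1 :=
          pairXX s hsharp hst hX1'0 hX2'0 hX1'1 hX2'1 hX1'inv hX2'inv hcop
        have hEstar : s.star E = Y := by
          calc s.star E = s.star (E * 1) := by rw [mul_one]
            _ = s.star (E * s.star (Y * Y⁻¹)) := by rw [hYinv]
            _ = s.star (E * (Y * Y⁻¹)) :=
                star_mul_star_right s hE0 (mul_ne_zero' hY0 hYinvne)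
            _ = s.star ((E * Y⁻¹) * Y) := by
                rw [show E * (Y * Y⁻¹) = (E * Y⁻¹) * Y by ring]
            _ = s.star (s.star (E * Y⁻¹) * Y) :=
                (star_mul_star_left s hEYne hY0).symm
            _ = s.star (1 * Y) := by rw [← hsupEY, hpair]
            _ = s.star Y := by rw [one_mul]
            _ = Y := by rw [hY_def]; exact star_vOp s hF0
        calc s.star F = s.star (spanSingleton D⁰ g ⊔ F'') := by rw [← hFeq]
          _ = s.star (spanSingleton D⁰ g ⊔ s.star F'') :=
              (star_sup_star_right s hgne hF''0).symm
          _ = s.star (spanSingleton D⁰ g ⊔ X₂) := by rw [hIH, hX2_def]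
          _ = s.star E := by rw [hE_def]
          _ = Y := hEstar
          _ = vOp F := by rw [hY_def]

end Statement5Aux
end Aux5

section Aux6

open FractionalIdeal

variable {D K : Type*} [CommRing D] [IsDomain D] [Field K] [Algebra D K] [IsFractionRing D K]

namespace Statement5Aux

lemma vOp_zero : vOp (0 : FractionalIdeal D⁰ K) = 0 := by
  show ((0 : FractionalIdeal D⁰ K)⁻¹)⁻¹ = 0
  rw [inv_zero', inv_zero']

variable (s : StarOperation D K)

/-- Main integral case: `(A A⁻¹)* = 1` for every nonzero integral ideal `A`. -/
theorem integral_dedekind (hsharp : s.IsSharp) (hst : s.IsStable)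
    (hTV : ∀ I : Ideal D, I ≠ 0 →
      tOp (I : FractionalIdeal D⁰ K) = vOp (I : FractionalIdeal D⁰ K))
    (A : FractionalIdeal D⁰ K) (hA0 : A ≠ 0) (hA1 : A ≤ 1) :
    s.star (A * A⁻¹) = 1 := by
  set E : FractionalIdeal D⁰ K := A * A⁻¹ with hE_def
  have hE0 : E ≠ 0 := mul_ne_zero' hA0 (inv_ne_zero' hA0)
  have hE1 : E ≤ 1 := mul_inv_le_one'
  -- `E` has trivial inverse (D is a v-domain, by `vinv`)
  have hEinv : E⁻¹ = 1 := by
    apply le_antisymm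
    · intro z hz
      by_cases hz0 : z = 0
      · subst hz0; exact FractionalIdeal.zero_mem _
      have hle := spanSingleton_le_iff_mem.mpr hz
      rw [inv_eq] at hle
      have h1 : spanSingleton D⁰ z * (A * A⁻¹) ≤ 1 := (le_div_iff_mul_le hE0).mp hle
      have h2 : spanSingleton D⁰ z * A⁻¹ ≤ A⁻¹ := by
        show _ ≤ 1 / A
        rw [le_div_iff_mul_le hA0]
        calc spanSingleton D⁰ z * A⁻¹ * A = spanSingleton D⁰ z * (A * A⁻¹) := by ring
          _ ≤ 1 := h1
      have h3 : spanSingleton D⁰ z * (vOp A * A⁻¹) ≤ vOp A * A⁻¹ := by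
        calc spanSingleton D⁰ z * (vOp A * A⁻¹) = vOp A * (spanSingleton D⁰ z * A⁻¹) := by ring
          _ ≤ vOp A * A⁻¹ := mul_le_mul'' (le_refl _) h2
      have h4 : z ∈ s.star (vOp A * A⁻¹) :=
        mem_star_of_smul_le s (mul_ne_zero' (vOp_ne_zero hA0) (inv_ne_zero' hA0))
          (mul_ne_zero' (vOp_ne_zero hA0) (inv_ne_zero' hA0))
          (vinv s hsharp A hA0 hA1) h3
      rwa [vinv s hsharp A hA0 hA1] at h4
    · have h5 := inv_anti_mono hE0 (one_ne_zero' (FractionalIdeal D⁰ K)) hE1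
      rwa [inv_one'] at h5
  have hvE : vOp E = 1 := by
    show (E⁻¹)⁻¹ = 1
    rw [hEinv, inv_one']
  obtain ⟨E₀, hE₀⟩ := le_one_iff_exists_coeIdeal.mp hE1
  have hE₀ne : E₀ ≠ 0 := coeIdeal_ne_zero_of_ne (K := K) (by rw [hE₀]; exact hE0)
  have htv : tOp E = vOp E := by rw [← hE₀]; exact hTV E₀ hE₀ne
  have h1mem : (1 : K) ∈ vOp E := by
    rw [hvE]
    exact one_mem_one _
  have h1t : (1 : K) ∈ tOp E := by rw [htv]; exact h1mem
  -- extract a finitely generated witness from the t-operation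
  have h1t' : (1 : K) ∈
      (⨆ J : {J : FractionalIdeal D⁰ K // (J : Submodule D K).FG ∧ J ≤ E},
        ((vOp (J : FractionalIdeal D⁰ K) : FractionalIdeal D⁰ K) : Submodule D K)) := h1t
  haveI : Nonempty {J : FractionalIdeal D⁰ K // (J : Submodule D K).FG ∧ J ≤ E} :=
    ⟨⟨0, by rw [coe_zero]; exact Submodule.fg_bot, zero_le _⟩⟩
  have hdir : Directed (· ≤ ·)
      (fun J : {J : FractionalIdeal D⁰ K // (J : Submodule D K).FG ∧ J ≤ E} =>
        ((vOp (J : FractionalIdeal D⁰ K) : FractionalIdeal D⁰ K) : Submodule D K)) := by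
    intro i j
    refine ⟨⟨i.1 ⊔ j.1, ?_, sup_le i.2.2 j.2.2⟩, ?_, ?_⟩
    · rw [coe_sup]
      exact Submodule.FG.sup i.2.1 j.2.1
    · exact coe_le_coe.mpr (vOp_mono le_sup_left)
    · exact coe_le_coe.mpr (vOp_mono le_sup_right)
  obtain ⟨⟨J, hJfg, hJle⟩, hJmem⟩ := (Submodule.mem_iSup_of_directed _ hdir).mp h1t'
  have hJmem' : (1 : K) ∈ vOp J := mem_coe.mp hJmem
  have hJ0 : J ≠ 0 := by
    intro h
    rw [h, vOp_zero, mem_zero_iff] at hJmem'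
    exact one_ne_zero hJmem'
  have hJ1 : J ≤ 1 := le_trans hJle hE1
  have hJv : vOp J = 1 := by
    apply le_antisymm
    · calc vOp J ≤ vOp E := vOp_mono hJle
        _ = 1 := hvE
    · rw [← spanSingleton_one (S := D⁰)]
      exact spanSingleton_le_iff_mem.mpr hJmem'
  obtain ⟨T, hT⟩ := hJfg
  have hstarJ : s.star J = 1 := by
    rw [fg_star_eq_vOp s hsharp hst T J hJ0 hJ1 hT.symm]
    exact hJv
  apply le_antisymm (star_le_one s hE0 hE1)
  calc (1 : FractionalIdeal D⁰ K) = s.star J := hstarJ.symm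
    _ ≤ s.star E := s.star_mono _ _ hJ0 hE0 hJle

end Statement5Aux
end Aux6

/-- Let `*` be a stable star operation of finite character on `D`
such that `D` is `*`-sharp. If `D` is a TV domain (`I_t = I_v` for every nonzero
ideal `I`), then `D` is `*`-Dedekind. -/
theorem statement5 (D : Type*) [CommRing D] [IsDomain D]
    (K : Type*) [Field K] [Algebra D K] [IsFractionRing D K]
    (s : StarOperation D K) (hst : s.IsStable) (hfc : s.HasFiniteCharacter)
    (hsharp : s.IsSharp)
    (hTV : ∀ I : Ideal D, I ≠ 0 → tOp (I : FractionalIdeal D⁰ K) = vOp (I : FractionalIdeal D⁰ K)) :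
    s.IsStarDedekind := by
  open FractionalIdeal Statement5Aux in
  intro I hI
  obtain ⟨a, I₀, ha0, hI_eq⟩ := FractionalIdeal.exists_eq_spanSingleton_mul I
  set xa : K := algebraMap D K a with hxa_def
  have hxa : xa ≠ 0 := fun h => ha0 (IsFractionRing.to_map_eq_zero_iff.mp h)
  have hA0 : (I₀ : FractionalIdeal D⁰ K) ≠ 0 := by
    intro h
    apply hI
    rw [hI_eq, h, mul_zero]
  have hIinv : I⁻¹ = FractionalIdeal.spanSingleton D⁰ xa * (I₀ : FractionalIdeal D⁰ K)⁻¹ := by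
    rw [hI_eq, Statement5Aux.inv_spanSingleton_mul (inv_ne_zero hxa) _ hA0, inv_inv]
  have hprod : I * I⁻¹ = (I₀ : FractionalIdeal D⁰ K) * (I₀ : FractionalIdeal D⁰ K)⁻¹ := by
    rw [hIinv, hI_eq,
      show (FractionalIdeal.spanSingleton D⁰ xa⁻¹ * (I₀ : FractionalIdeal D⁰ K)) *
          (FractionalIdeal.spanSingleton D⁰ xa * (I₀ : FractionalIdeal D⁰ K)⁻¹) =
        (FractionalIdeal.spanSingleton D⁰ xa⁻¹ * FractionalIdeal.spanSingleton D⁰ xa) *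
          ((I₀ : FractionalIdeal D⁰ K) * (I₀ : FractionalIdeal D⁰ K)⁻¹) by ring,
      FractionalIdeal.spanSingleton_mul_spanSingleton, inv_mul_cancel₀ hxa,
      FractionalIdeal.spanSingleton_one, one_mul]
  rw [hprod]
  exact Statement5Aux.integral_dedekind s hsharp hst hTV _ hA0 FractionalIdeal.coeIdeal_le_one
end
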